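/- arXiv:1310.1726 — 2 statements merged into one kernel-verified Lean document; each statement's English description precedes it below -/
import Mathlib

section
/- Let P be a finite set of at least 3 points in the plane in general position. Then every triangulation T of P is 2-connected (as an abstract graph). -/
open scoped Classical

noncomputable section

/-- Points of the plane. -/
abbrev Pt : Type := ℝ × ℝ

/-- Orientation determinant of two plane vectors. -/
def det2 (u v : Pt) : ℝ := u.1 * v.2 - u.2 * v.1

/-- `P` is in general position: no three distinct points of `P` are collinear. -/
def GenPos (P : Finset Pt) : Prop :=
  ∀ p ∈ P, ∀ q ∈ P, ∀ r ∈ P, p ≠ q → p ≠ r → q ≠ r → ¬Collinear ℝ ({p, q, r} : Set Pt)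

/-- The vertices of the convex hull of `P` (the extreme points of `P`). -/
def hullVx (P : Finset Pt) : Finset Pt :=
  P.filter fun p => p ∉ convexHull ℝ ((P.erase p : Finset Pt) : Set Pt)

/-- The points of `P` lying in the interior of the convex hull of `P`. -/
def intPts (P : Finset Pt) : Finset Pt :=
  P.filter fun p => p ∈ interior (convexHull ℝ (P : Set Pt))

/-- `p` and `q` are consecutive vertices of the convex hull of `P`
(the segment joining them is an edge of the hull boundary). -/
def HullEdge (P : Finset Pt) (p q : Pt) : Prop :=
  p ∈ hullVx P ∧ q ∈ hullVx P ∧ p ≠ q ∧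
    segment ℝ p q ⊆ frontier (convexHull ℝ (P : Set Pt))

/-- A plane graph with vertex set `P`, all of whose edges are straight line
segments: edges may only meet at common endpoints. -/
structure PlaneGraph (P : Finset Pt) where
  Adj : Pt → Pt → Prop
  symm : ∀ {p q}, Adj p q → Adj q p
  mem_left : ∀ {p q}, Adj p q → p ∈ P
  ne : ∀ {p q}, Adj p q → p ≠ q
  noncross : ∀ {p q r s}, Adj p q → Adj r s →
    (openSegment ℝ p q ∩ openSegment ℝ r s).Nonempty → ({p, q} : Set Pt) = {r, s}

/-- A triangulation of `P`: a plane straight-line graph on `P` that is maximal,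
i.e. no further segment between points of `P` can be added without crossing an
existing edge.  (For a finite point set in general position this is equivalent
to: the outer face is the complement of the convex hull and every bounded face
is a triangle.) -/
structure Triangulation (P : Finset Pt) extends PlaneGraph P where
  maximal : ∀ p ∈ P, ∀ q ∈ P, p ≠ q → ¬Adj p q →
    ∃ r s, Adj r s ∧ ({p, q} : Set Pt) ≠ {r, s} ∧
      (openSegment ℝ p q ∩ openSegment ℝ r s).Nonempty

/-- The abstract graph underlying a plane graph. -/
def PlaneGraph.graph {P : Finset Pt} (G : PlaneGraph P) : SimpleGraph {x // x ∈ P} where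
  Adj p q := G.Adj p q
  symm := ⟨fun _ _ h => G.symm h⟩
  loopless := ⟨fun _ h => G.ne h rfl⟩

/-- A graph is `k`-connected if it has at least `k+1` vertices and no set of at
most `k-1` vertices disconnects it (removing fewer than `k` vertices leaves a
connected graph). -/
def KConnected {V : Type*} [Fintype V] (G : SimpleGraph V) (k : ℕ) : Prop :=
  k + 1 ≤ Fintype.card V ∧
    ∀ S : Finset V, S.card < k → (G.induce ((↑S : Set V)ᶜ)).Connected

/-- A chord of a plane graph on `P`: an edge joining two nonconsecutive
vertices of the convex hull of `P`. -/
def IsChord {P : Finset Pt} (G : PlaneGraph P) (p q : Pt) : Prop :=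
  G.Adj p q ∧ p ∈ hullVx P ∧ q ∈ hullVx P ∧ ¬HullEdge P p q

/-- Three points forming a triangle of the graph `G` (pairwise adjacent). -/
def IsTriangleOf {P : Finset Pt} (G : PlaneGraph P) (p q r : Pt) : Prop :=
  G.Adj p q ∧ G.Adj q r ∧ G.Adj p r

/-- A complex triangle of `G`: a triangle formed by three edges of `G` that
contains a point of `P` in its interior and another point of `P` in its
exterior. -/
def IsComplexTri {P : Finset Pt} (G : PlaneGraph P) (p q r : Pt) : Prop :=
  IsTriangleOf G p q r ∧
    (∃ x ∈ P, x ∈ interior (convexHull ℝ ({p, q, r} : Set Pt))) ∧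
    (∃ y ∈ P, y ∉ convexHull ℝ ({p, q, r} : Set Pt))

/-- A triangulation is noncomplex if it has neither chords nor complex
triangles. -/
def Noncomplex {P : Finset Pt} (T : Triangulation P) : Prop :=
  (∀ p q, ¬IsChord T.toPlaneGraph p q) ∧ ∀ p q r, ¬IsComplexTri T.toPlaneGraph p q r

/-- `Q` is anomalous: its convex hull is a triangle and there is a hull vertex
`p` such that every point of `Q \ {p}` lies on the boundary of the convex hull
of `Q \ {p}`. -/
def Anomalous (Q : Finset Pt) : Prop :=
  (hullVx Q).card = 3 ∧
    ∃ p ∈ hullVx Q, ∀ q ∈ Q.erase p,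
      q ∉ interior (convexHull ℝ ((Q.erase p : Finset Pt) : Set Pt))

/-- `s` is a vertex of the convex hull of `P` lying strictly between `pr` and
`pt` in counterclockwise order (i.e. on the open counterclockwise hull arc
from `pr` to `pt`; for a hull traversed counterclockwise these are exactly the
hull vertices strictly on the right of the directed chord `pr → pt`). -/
def CCWBetween (P : Finset Pt) (pr pt s : Pt) : Prop :=
  s ∈ hullVx P ∧ det2 (pt - pr) (s - pr) < 0

/-- The set `S` of hull vertices strictly between `pr` and `pt`
counterclockwise. -/
def cutSet (P : Finset Pt) (pr pt : Pt) : Finset Pt :=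
  P.filter fun s => CCWBetween P pr pt s

/-- An inward triangle of a plane graph `G` on `P`: a triangle of `G` two of
whose vertices `b`, `c` are consecutive hull vertices and whose third vertex
`a` (its inward vertex) is an interior point of the hull. -/
def InwardTri {P : Finset Pt} (G : PlaneGraph P) (b c a : Pt) : Prop :=
  IsTriangleOf G b c a ∧ HullEdge P b c ∧ a ∈ intPts P

/-- A (geometric) inward triangle of the point set `P`: its base `b c` is an
edge of the hull and its inward vertex `a` is an interior point. -/
def GInwardTri (P : Finset Pt) (b c a : Pt) : Prop :=
  HullEdge P b c ∧ a ∈ intPts P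

/-- The triangle `b c a` contains no point of `P` in its interior. -/
def EmptyTri (P : Finset Pt) (b c a : Pt) : Prop :=
  ∀ x ∈ P, x ∉ interior (convexHull ℝ ({b, c, a} : Set Pt))

/-- The inward triangle `b c a` is forbidden: for some hull vertices `pr ≠ pt`,
its base edge lies on the clockwise hull chain from `pr` to `pt` (i.e. `b`, `c`
are not strictly counterclockwise between `pr` and `pt`) while its inward
vertex lies on the boundary of the convex hull of `Q = P \ S`. -/
def ForbiddenTri (P : Finset Pt) (b c a : Pt) : Prop :=
  ∃ pr ∈ hullVx P, ∃ pt ∈ hullVx P, pr ≠ pt ∧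
    b ∉ cutSet P pr pt ∧ c ∉ cutSet P pr pt ∧
    a ∉ interior (convexHull ℝ ((P \ cutSet P pr pt : Finset Pt) : Set Pt))

/-- A triangle, recorded as `(b, c, a)` with base `b c` and inward vertex `a`. -/
abbrev Tri : Type := Pt × Pt × Pt

def triVerts (t : Tri) : Set Pt := {t.1, t.2.1, t.2.2}

def triInterior (t : Tri) : Set Pt := interior (convexHull ℝ (triVerts t))

/-- A non-forbidden empty inward triangle of `P`. -/
def GoodTri (P : Finset Pt) (t : Tri) : Prop :=
  GInwardTri P t.1 t.2.1 t.2.2 ∧ EmptyTri P t.1 t.2.1 t.2.2 ∧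
    ¬ForbiddenTri P t.1 t.2.1 t.2.2

/-- Two triangles share an edge (i.e. share two distinct vertices). -/
def ShareEdge (t₁ t₂ : Tri) : Prop :=
  ∃ u v : Pt, u ≠ v ∧ u ∈ triVerts t₁ ∧ v ∈ triVerts t₁ ∧
    u ∈ triVerts t₂ ∧ v ∈ triVerts t₂

/-- A compatible set of triangles: all its members are non-forbidden empty
inward triangles, and no two (distinct) members share an edge, an inward
vertex, or an interior point. -/
def Compatible (P : Finset Pt) (Tc : Finset Tri) : Prop :=
  (∀ t ∈ Tc, GoodTri P t) ∧
    ∀ t₁ ∈ Tc, ∀ t₂ ∈ Tc, triVerts t₁ ≠ triVerts t₂ →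
      ¬ShareEdge t₁ t₂ ∧ t₁.2.2 ≠ t₂.2.2 ∧ triInterior t₁ ∩ triInterior t₂ = ∅

/-- A maximal compatible set: no inward triangle can be added while keeping it
compatible. -/
def MaxCompatible (P : Finset Pt) (Tc : Finset Tri) : Prop :=
  Compatible P Tc ∧
    ∀ t : Tri, Compatible P (insert t Tc) → ∃ t' ∈ Tc, triVerts t' = triVerts t

/-- The number of triangles of `Tc` whose inward vertex is a vertex of the
convex hull of `P'` (counted up to the underlying vertex set). -/
def tcPrimeCard (P : Finset Pt) (Tc : Finset Tri) : ℕ :=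
  ((Tc.filter fun t => t.2.2 ∈ hullVx (intPts P)).image triVerts).card

/-- `max|T_c'|`: the maximum, over all maximal compatible sets `T_c`, of the
number of triangles of `T_c` whose inward vertex is a hull vertex of `P'`. -/
noncomputable def maxTcPrime (P : Finset Pt) : ℕ :=
  sSup {m | ∃ Tc : Finset Tri, MaxCompatible P Tc ∧ m = tcPrimeCard P Tc}

namespace Aux
def dot (u y : Pt) : ℝ := u.1 * y.1 + u.2 * y.2

lemma mem_openSegment_iff {p q z : Pt} :
    z ∈ openSegment ℝ p q ↔ ∃ t : ℝ, 0 < t ∧ t < 1 ∧ z = p + t • (q - p) := by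
  rw [openSegment_eq_image']
  constructor
  · rintro ⟨t, ht, rfl⟩; exact ⟨t, ht.1, ht.2, rfl⟩
  · rintro ⟨t, h1, h2, rfl⟩; exact ⟨t, ⟨h1, h2⟩, rfl⟩

lemma pt_ext {u v : Pt} (h1 : u.1 = v.1) (h2 : u.2 = v.2) : u = v := Prod.ext h1 h2

@[simp] lemma smul_fst (c : ℝ) (u : Pt) : (c • u).1 = c * u.1 := rfl
@[simp] lemma smul_snd (c : ℝ) (u : Pt) : (c • u).2 = c * u.2 := rfl
@[simp] lemma add_fst (u v : Pt) : (u + v).1 = u.1 + v.1 := rfl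
@[simp] lemma add_snd (u v : Pt) : (u + v).2 = u.2 + v.2 := rfl
@[simp] lemma sub_fst (u v : Pt) : (u - v).1 = u.1 - v.1 := rfl
@[simp] lemma sub_snd (u v : Pt) : (u - v).2 = u.2 - v.2 := rfl

/-- dependence from vanishing determinant -/
lemma exists_smul_of_det2 {u v : Pt} (hu : u ≠ 0) (h : det2 u v = 0) :
    ∃ t : ℝ, v = t • u := by
  by_cases h1 : u.1 = 0
  · have h2 : u.2 ≠ 0 := fun h2 => hu (pt_ext (by simp [h1]) (by simp [h2]))
    have hv1 : v.1 = 0 := by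
      simp only [det2, h1, zero_mul, zero_sub, neg_eq_zero, mul_eq_zero] at h
      tauto
    exact ⟨v.2 / u.2, pt_ext (by simp [h1, hv1]) (by rw [smul_snd, div_mul_cancel₀ _ h2])⟩
  · refine ⟨v.1 / u.1, pt_ext (by rw [smul_fst, div_mul_cancel₀ _ h1]) ?_⟩
    simp only [det2] at h
    rw [smul_snd]; field_simp
    nlinarith [h]

lemma collinear_of_det2 {a b c : Pt} (hab : a ≠ b) (h : det2 (b - a) (c - a) = 0) :
    Collinear ℝ ({a, b, c} : Set Pt) := by
  obtain ⟨t, ht⟩ := exists_smul_of_det2 (sub_ne_zero.mpr (Ne.symm hab)) h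
  rw [collinear_iff_of_mem (Set.mem_insert a {b, c})]
  refine ⟨b - a, ?_⟩
  intro p hp
  rcases hp with rfl | rfl | rfl
  · exact ⟨0, by simp⟩
  · exact ⟨1, by simp⟩
  · exact ⟨t, by rw [← ht]; simp [vadd_eq_add]⟩
end Aux
section Seg
open Aux
variable {P : Finset Pt}

/-- general position: determinant of distinct triple nonzero -/
lemma gp_det (hgp : GenPos P) {a b c : Pt} (ha : a ∈ P) (hb : b ∈ P) (hc : c ∈ P)
    (hab : a ≠ b) (hac : a ≠ c) (hbc : b ≠ c) : det2 (b - a) (c - a) ≠ 0 :=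
  fun h => hgp a ha b hb c hc hab hac hbc (collinear_of_det2 hab h)

/-- a point of an open segment gives a vanishing determinant -/
lemma det2_of_mem_openSegment {a b z : Pt} (hz : z ∈ openSegment ℝ a b) :
    det2 (b - a) (z - a) = 0 := by
  obtain ⟨t, _, _, rfl⟩ := mem_openSegment_iff.mp hz
  simp [det2]; ring

/-- endpoints are not on the open segment -/
lemma left_not_mem_openSegment {a b : Pt} (hab : a ≠ b) : a ∉ openSegment ℝ a b := by
  intro h
  obtain ⟨t, ht0, _, he⟩ := mem_openSegment_iff.mp h
  have h1 : a.1 = a.1 + t * (b.1 - a.1) := congrArg Prod.fst he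
  have h2 : a.2 = a.2 + t * (b.2 - a.2) := congrArg Prod.snd he
  apply hab
  apply pt_ext
  · nlinarith
  · nlinarith

lemma right_not_mem_openSegment {a b : Pt} (hab : a ≠ b) : b ∉ openSegment ℝ a b := by
  rw [openSegment_symm]; exact left_not_mem_openSegment (Ne.symm hab)

/-- open segments from a common endpoint to non-collinear points are disjoint -/
lemma openSegment_common_endpoint {a b c z : Pt} (hd : det2 (b - a) (c - a) ≠ 0)
    (h1 : z ∈ openSegment ℝ a b) (h2 : z ∈ openSegment ℝ a c) : False := by
  obtain ⟨t, ht0, _, he⟩ := mem_openSegment_iff.mp h1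
  obtain ⟨s, hs0, _, hf⟩ := mem_openSegment_iff.mp h2
  apply hd
  have E1 : t * (b.1 - a.1) = s * (c.1 - a.1) := by
    have g1 := congrArg Prod.fst he; have g2 := congrArg Prod.fst hf
    simp at g1 g2; nlinarith
  have E2 : t * (b.2 - a.2) = s * (c.2 - a.2) := by
    have g1 := congrArg Prod.snd he; have g2 := congrArg Prod.snd hf
    simp at g1 g2; nlinarith
  have key : (t * s) * det2 (b - a) (c - a) = 0 := by
    simp only [det2, sub_fst, sub_snd]
    linear_combination (s * (c.2 - a.2)) * E1 - (s * (c.1 - a.1)) * E2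
  rcases mul_eq_zero.mp key with h | h
  · rcases mul_eq_zero.mp h with h | h
    · exact absurd h (ne_of_gt ht0)
    · exact absurd h (ne_of_gt hs0)
  · exact h

/-- sub-segment from the left endpoint -/
lemma openSegment_left_trans {a x w z : Pt} (hx : x ∈ openSegment ℝ a w)
    (hz : z ∈ openSegment ℝ a x) : z ∈ openSegment ℝ a w := by
  obtain ⟨t, ht0, ht1, rfl⟩ := mem_openSegment_iff.mp hx
  obtain ⟨s, hs0, hs1, rfl⟩ := mem_openSegment_iff.mp hz
  refine mem_openSegment_iff.mpr ⟨s * t, by positivity, ?_, ?_⟩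
  · nlinarith
  · apply pt_ext <;> simp <;> ring

/-- sub-segment towards the right endpoint: x ∈ (r,s), z ∈ (x,r) implies z ∈ (r,s) -/
lemma openSegment_right_trans {r s x z : Pt} (hx : x ∈ openSegment ℝ r s)
    (hz : z ∈ openSegment ℝ x r) : z ∈ openSegment ℝ r s := by
  obtain ⟨t, ht0, ht1, rfl⟩ := mem_openSegment_iff.mp hx
  obtain ⟨c, hc0, hc1, rfl⟩ := mem_openSegment_iff.mp hz
  refine mem_openSegment_iff.mpr ⟨(1 - c) * t, by nlinarith, by nlinarith, ?_⟩
  apply pt_ext <;> simp <;> ring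

/-- sub-segment in the middle: z ∈ (p,q), y ∈ (z,q) implies y ∈ (p,q) -/
lemma openSegment_mid_trans {p q z y : Pt} (hz : z ∈ openSegment ℝ p q)
    (hy : y ∈ openSegment ℝ z q) : y ∈ openSegment ℝ p q := by
  obtain ⟨t, ht0, ht1, rfl⟩ := mem_openSegment_iff.mp hz
  obtain ⟨c, hc0, hc1, rfl⟩ := mem_openSegment_iff.mp hy
  refine mem_openSegment_iff.mpr ⟨t + c * (1 - t), by nlinarith, by nlinarith, ?_⟩
  apply pt_ext <;> simp <;> ring

end Seg
section Cross
open Aux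
variable {P : Finset Pt}

lemma det2_lin (u v w : Pt) (c : ℝ) : det2 u (v + c • w) = det2 u v + c * det2 u w := by
  simp [det2]; ring

lemma det2_self_smul (u : Pt) (c : ℝ) : det2 u (c • u) = 0 := by simp [det2]; ring

/-- no point of P lies on an open segment between two points of P -/
lemma no_P_in_open (hgp : GenPos P) {a b w : Pt} (ha : a ∈ P) (hb : b ∈ P) (hw : w ∈ P)
    (hab : a ≠ b) (hmem : w ∈ openSegment ℝ a b) : False := by
  by_cases hwa : w = a
  · exact left_not_mem_openSegment hab (hwa ▸ hmem)
  by_cases hwb : w = b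
  · exact right_not_mem_openSegment hab (hwb ▸ hmem)
  exact gp_det hgp ha hb hw hab (Ne.symm hwa) (Ne.symm hwb) (det2_of_mem_openSegment hmem)

variable (T : Triangulation P)

/-- endpoints of a crossing edge are distinct from the crossed pair -/
lemma cross_endpoints_ne (hgp : GenPos P) {a b r s z : Pt} (ha : a ∈ P) (hb : b ∈ P)
    (hab : a ≠ b) (hnadj : ¬T.Adj a b) (hrs : T.Adj r s)
    (hz1 : z ∈ openSegment ℝ a b) (hz2 : z ∈ openSegment ℝ r s) :
    r ≠ a ∧ r ≠ b ∧ s ≠ a ∧ s ≠ b := by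
  have hr : r ∈ P := T.mem_left hrs
  have hs : s ∈ P := T.mem_left (T.symm hrs)
  have hrsne : r ≠ s := T.ne hrs
  have hpair : ¬(r = a ∧ s = b) ∧ ¬(r = b ∧ s = a) := by
    constructor
    · rintro ⟨rfl, rfl⟩; exact hnadj hrs
    · rintro ⟨rfl, rfl⟩; exact hnadj (T.symm hrs)
  refine ⟨?_, ?_, ?_, ?_⟩
  · rintro rfl
    have hsb : s ≠ b := fun h => hpair.1 ⟨rfl, h⟩
    exact openSegment_common_endpoint
      (gp_det hgp ha hb hs hab hrsne (Ne.symm hsb)) hz1 hz2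
  · rintro rfl
    have hsa : s ≠ a := fun h => hpair.2 ⟨rfl, h⟩
    rw [openSegment_symm] at hz1
    exact openSegment_common_endpoint
      (gp_det hgp hb ha hs (Ne.symm hab) hrsne (Ne.symm hsa)) hz1 hz2
  · rintro rfl
    have hrb : r ≠ b := fun h => hpair.2 ⟨h, rfl⟩
    rw [openSegment_symm] at hz2
    exact openSegment_common_endpoint
      (gp_det hgp ha hb hr hab (Ne.symm hrsne) (Ne.symm hrb)) hz1 hz2
  · rintro rfl
    have hra : r ≠ a := fun h => hpair.1 ⟨h, rfl⟩
    rw [openSegment_symm] at hz1 hz2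
    exact openSegment_common_endpoint
      (gp_det hgp hb ha hr (Ne.symm hab) (Ne.symm hrsne) (Ne.symm hra)) hz1 hz2

/-- first crossing along a non-edge between points of P -/
lemma exists_first_crossing (hgp : GenPos P) {a b : Pt} (ha : a ∈ P) (hb : b ∈ P)
    (hab : a ≠ b) (hnadj : ¬T.Adj a b) :
    ∃ x r s, T.Adj r s ∧ x ∈ openSegment ℝ r s ∧ x ∈ openSegment ℝ a b ∧
      (∀ p q, T.Adj p q → ∀ z ∈ openSegment ℝ a x, z ∉ openSegment ℝ p q) := by
  classical
  set d : Pt := b - a with hd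
  have hdne : d ≠ 0 := sub_ne_zero.mpr (Ne.symm hab)
  set 𝒯 : Set ℝ := {t : ℝ | (0 < t ∧ t < 1) ∧
      ∃ r s, T.Adj r s ∧ a + t • d ∈ openSegment ℝ r s} with h𝒯
  have hfin : 𝒯.Finite := by
    set E : Finset (Pt × Pt) := (P ×ˢ P).filter (fun e => T.Adj e.1 e.2) with hE
    have hsub : 𝒯 ⊆ ⋃ e ∈ E, {t : ℝ | (0 < t ∧ t < 1) ∧ a + t • d ∈ openSegment ℝ e.1 e.2} := by
      rintro t ⟨htI, r, s, hadj, hmem⟩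
      have hr : r ∈ P := T.mem_left hadj
      have hs : s ∈ P := T.mem_left (T.symm hadj)
      have heE : (r, s) ∈ E := Finset.mem_filter.mpr ⟨Finset.mem_product.mpr ⟨hr, hs⟩, hadj⟩
      exact Set.mem_biUnion heE ⟨htI, hmem⟩
    refine Set.Finite.subset (Set.Finite.biUnion E.finite_toSet (fun e he => ?_)) hsub
    apply Set.Subsingleton.finite
    rintro t₁ ⟨ht₁I, hm₁⟩ t₂ ⟨ht₂I, hm₂⟩
    by_contra hne
    obtain ⟨r, s⟩ := e
    have hadj : T.Adj r s := (Finset.mem_filter.mp (Finset.mem_coe.mp he)).2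
    simp only at hm₁ hm₂
    obtain ⟨u₁, _, _, he₁⟩ := mem_openSegment_iff.mp hm₁
    obtain ⟨u₂, _, _, he₂⟩ := mem_openSegment_iff.mp hm₂
    -- determinant along d
    have hz₁ : a + t₁ • d ∈ openSegment ℝ a b := by
      exact mem_openSegment_iff.mpr ⟨t₁, ht₁I.1, ht₁I.2, rfl⟩
    have hrab : r ≠ a ∧ r ≠ b ∧ s ≠ a ∧ s ≠ b :=
      cross_endpoints_ne T hgp ha hb hab hnadj hadj hz₁ hm₁
    have hr : r ∈ P := T.mem_left hadj
    have hDr : det2 d (r - a) ≠ 0 := by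
      intro h0
      exact gp_det hgp ha hb hr hab (Ne.symm hrab.1) (Ne.symm hrab.2.1) h0
    have key₁ : det2 d (r - a) + u₁ * det2 d (s - r) = 0 := by
      have : det2 d ((a + t₁ • d) - a) = 0 := by
        have : (a + t₁ • d) - a = t₁ • d := by abel
        rw [this]; exact det2_self_smul d t₁
      rw [he₁] at this
      have hre : (r + u₁ • (s - r)) - a = (r - a) + u₁ • (s - r) := by abel
      rw [hre, det2_lin] at this
      exact this
    have key₂ : det2 d (r - a) + u₂ * det2 d (s - r) = 0 := by
      have : det2 d ((a + t₂ • d) - a) = 0 := by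
        have : (a + t₂ • d) - a = t₂ • d := by abel
        rw [this]; exact det2_self_smul d t₂
      rw [he₂] at this
      have hre : (r + u₂ • (s - r)) - a = (r - a) + u₂ • (s - r) := by abel
      rw [hre, det2_lin] at this
      exact this
    by_cases hu : u₁ = u₂
    · apply hne
      have : a + t₁ • d = a + t₂ • d := by rw [he₁, he₂, hu]
      have h2 : (t₁ - t₂) • d = 0 := by
        have := sub_eq_zero.mpr this
        have h3 : (a + t₁ • d) - (a + t₂ • d) = (t₁ - t₂) • d := by
          rw [sub_smul]; abel
        rw [← h3, this]
      rcases smul_eq_zero.mp h2 with h | h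
      · linarith [sub_eq_zero.mp (by linarith [h] : t₁ - t₂ = 0)]
      · exact absurd h hdne
    · have hds : det2 d (s - r) = 0 := by
        have : (u₁ - u₂) * det2 d (s - r) = 0 := by linarith
        rcases mul_eq_zero.mp this with h | h
        · exact absurd (sub_eq_zero.mp h) hu
        · exact h
      rw [hds, mul_zero, add_zero] at key₁
      exact hDr key₁
  have hne : 𝒯.Nonempty := by
    obtain ⟨r, s, hadj, hpne, z, hz1, hz2⟩ := T.maximal a ha b hb hab hnadj
    obtain ⟨t, ht0, ht1, rfl⟩ := mem_openSegment_iff.mp hz1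
    exact ⟨t, ⟨ht0, ht1⟩, r, s, hadj, hz2⟩
  have hne' : hfin.toFinset.Nonempty := by
    rwa [← Set.Finite.toFinset_nonempty hfin] at hne
  set t₀ := hfin.toFinset.min' hne' with ht₀
  have ht₀mem : t₀ ∈ 𝒯 := by
    have := hfin.toFinset.min'_mem hne'
    rwa [Set.Finite.mem_toFinset] at this
  have ht₀min : ∀ t ∈ 𝒯, t₀ ≤ t := by
    intro t ht
    exact hfin.toFinset.min'_le t ((Set.Finite.mem_toFinset hfin).mpr ht)
  obtain ⟨⟨h0, h1⟩, r, s, hadj, hmem⟩ := ht₀mem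
  refine ⟨a + t₀ • d, r, s, hadj, hmem, mem_openSegment_iff.mpr ⟨t₀, h0, h1, rfl⟩, ?_⟩
  intro p q hpq z hz hzpq
  obtain ⟨c, hc0, hc1, rfl⟩ := mem_openSegment_iff.mp hz
  have he : a + c • ((a + t₀ • d) - a) = a + (c * t₀) • d := by
    apply pt_ext <;> simp <;> ring
  rw [he] at hzpq
  have : (c * t₀) ∈ 𝒯 := ⟨⟨by positivity, by nlinarith⟩, p, q, hpq, hzpq⟩
  have := ht₀min _ this
  nlinarith
end Cross
section Tri
open Aux

/-- strictly inside the triangle (a, x, r) -/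
def Ins (a x r y : Pt) : Prop :=
  0 < det2 (x - a) (y - a) * det2 (x - a) (r - a) ∧
  0 < det2 (r - x) (y - x) * det2 (r - x) (a - x) ∧
  0 < det2 (r - a) (y - a) * det2 (r - a) (x - a)

lemma det2_id1 (a x r : Pt) : det2 (r - x) (a - x) = det2 (x - a) (r - a) := by
  simp [det2]; ring

lemma det2_id2 (a x r : Pt) : det2 (r - a) (x - a) = -det2 (x - a) (r - a) := by
  simp [det2]; ring

lemma pos_aux2 {K' Fy α A β B : ℝ} (E : K' * Fy = α * A + β * B)
    (hA : 0 < A) (hB : 0 < B) (hα : 0 < α * K') (hβ : 0 < β * K') (hK' : K' ≠ 0) :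
    0 < Fy := by
  have h1 : 0 < (α * K') * A + (β * K') * B := add_pos (mul_pos hα hA) (mul_pos hβ hB)
  have h2 : K' ^ 2 * Fy = (α * K') * A + (β * K') * B := by linear_combination K' * E
  have h3 : 0 < K' ^ 2 := by positivity
  by_contra h
  push_neg at h
  nlinarith

lemma pos_aux3 {K' Fy α A β B γ C : ℝ} (E : K' * Fy = α * A + β * B + γ * C)
    (hA : 0 < A) (hB : 0 < B) (hC : 0 < C)
    (hα : 0 < α * K') (hβ : 0 < β * K') (hγ : 0 < γ * K') (hK' : K' ≠ 0) :
    0 < Fy := by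
  have h1 : 0 < (α * K') * A + (β * K') * B + (γ * K') * C :=
    add_pos (add_pos (mul_pos hα hA) (mul_pos hβ hB)) (mul_pos hγ hC)
  have h2 : K' ^ 2 * Fy = (α * K') * A + (β * K') * B + (γ * K') * C := by
    linear_combination K' * E
  have h3 : 0 < K' ^ 2 := by positivity
  by_contra h
  push_neg at h
  nlinarith

/-- nondegeneracy of triangle (a,x,r) with x on the open edge (r,s), a off its line -/
lemma K_ne_zero {a x r s : Pt} (hDa : det2 (s - r) (a - r) ≠ 0)
    (hx : x ∈ openSegment ℝ r s) : det2 (x - a) (r - a) ≠ 0 := by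
  obtain ⟨ν, hν0, _, rfl⟩ := mem_openSegment_iff.mp hx
  have e : det2 ((r + ν • (s - r)) - a) (r - a) = -(ν * det2 (s - r) (a - r)) := by
    simp [det2]; ring
  rw [e]
  intro h
  apply hDa
  have : ν * det2 (s - r) (a - r) = 0 := by linarith
  rcases mul_eq_zero.mp this with h' | h'
  · exact absurd h' (ne_of_gt hν0)
  · exact h'

/-- points of the open segment from a vertex to an interior point are interior -/
lemma ins_open_left {a x r t z : Pt} (hK : det2 (x - a) (r - a) ≠ 0)
    (ht : Ins a x r t) (hz : z ∈ openSegment ℝ a t) : Ins a x r z := by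
  obtain ⟨l, hl0, hl1, rfl⟩ := mem_openSegment_iff.mp hz
  obtain ⟨h1, h2, h3⟩ := ht
  have hK2 : 0 < det2 (x - a) (r - a) ^ 2 := by positivity
  refine ⟨?_, ?_, ?_⟩
  · have e : det2 (x - a) ((a + l • (t - a)) - a) = l * det2 (x - a) (t - a) := by
      simp [det2]; ring
    rw [e]; nlinarith
  · have e : det2 (r - x) ((a + l • (t - a)) - x)
        = (1 - l) * det2 (r - x) (a - x) + l * det2 (r - x) (t - x) := by
      simp [det2]; ring
    have hid : det2 (r - x) (a - x) = det2 (x - a) (r - a) := det2_id1 a x r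
    rw [e, hid]
    rw [hid] at h2
    nlinarith
  · have e : det2 (r - a) ((a + l • (t - a)) - a) = l * det2 (r - a) (t - a) := by
      simp [det2]; ring
    rw [e]; nlinarith

/-- interior points of a triangle with positive-dot vertices have positive dot -/
lemma ins_dot {u a x r y : Pt} (hK : det2 (x - a) (r - a) ≠ 0) (hy : Ins a x r y)
    (hdx : 0 < dot u (x - a)) (hdr : 0 < dot u (r - a)) : 0 < dot u (y - a) := by
  obtain ⟨h1, h2, h3⟩ := hy
  have E : det2 (x - a) (r - a) * dot u (y - a)
      = det2 (y - a) (r - a) * dot u (x - a) + det2 (x - a) (y - a) * dot u (r - a) := by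
    simp [det2, dot]; ring
  have hα : 0 < det2 (y - a) (r - a) * det2 (x - a) (r - a) := by
    have e : det2 (y - a) (r - a) * det2 (x - a) (r - a)
        = det2 (r - a) (y - a) * det2 (r - a) (x - a) := by
      simp [det2]; ring
    rw [e]; exact h3
  exact pos_aux2 E hdx hdr hα h1 hK

/-- an interior point of the sub-triangle (a, x₁, r₁) is interior to (a, x, r) -/
lemma ins_sub {a x r x₁ r₁ y : Pt} (hK : det2 (x - a) (r - a) ≠ 0)
    (hK' : det2 (x₁ - a) (r₁ - a) ≠ 0)
    (hx₁ : Ins a x r x₁) (hr₁ : Ins a x r r₁) (hy : Ins a x₁ r₁ y) :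
    Ins a x r y := by
  set K := det2 (x - a) (r - a) with hKdef
  set K' := det2 (x₁ - a) (r₁ - a) with hK'def
  set αn := det2 (y - a) (r₁ - a) with hαdef
  set βn := det2 (x₁ - a) (y - a) with hβdef
  set γn := det2 (r₁ - x₁) (y - x₁) with hγdef
  have hα : 0 < αn * K' := by
    have e : αn * K' = det2 (r₁ - a) (y - a) * det2 (r₁ - a) (x₁ - a) := by
      simp [hαdef, hK'def, det2]; ring
    rw [e]; exact hy.2.2
  have hβ : 0 < βn * K' := hy.1
  have hγ : 0 < γn * K' := by
    have e : γn * K' = det2 (r₁ - x₁) (y - x₁) * det2 (r₁ - x₁) (a - x₁) := by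
      have : det2 (r₁ - x₁) (a - x₁) = K' := det2_id1 a x₁ r₁
      rw [this]
    rw [e]; exact hy.2.1
  have hK2 : 0 < K ^ 2 := by positivity
  obtain ⟨hx1, hx2, hx3⟩ := hx₁
  obtain ⟨hr1, hr2, hr3⟩ := hr₁
  refine ⟨?_, ?_, ?_⟩
  · -- F1
    have E : K' * (det2 (x - a) (y - a) * K)
        = αn * (det2 (x - a) (x₁ - a) * K) + βn * (det2 (x - a) (r₁ - a) * K) := by
      simp [hαdef, hβdef, hK'def, hKdef, det2]; ring
    exact pos_aux2 E hx1 hr1 hα hβ hK'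
  · -- F2
    have E : K' * (det2 (r - x) (y - x) * det2 (r - x) (a - x))
        = αn * (det2 (r - x) (x₁ - x) * det2 (r - x) (a - x))
          + βn * (det2 (r - x) (r₁ - x) * det2 (r - x) (a - x))
          + γn * (det2 (r - x) (a - x) * det2 (r - x) (a - x)) := by
      simp [hαdef, hβdef, hγdef, hK'def, hKdef, det2]; ring
    have hCC : 0 < det2 (r - x) (a - x) * det2 (r - x) (a - x) := by
      have hid : det2 (r - x) (a - x) = K := det2_id1 a x r
      rw [hid]; exact mul_self_pos.mpr hK
    exact pos_aux3 E hx2 hr2 hCC hα hβ hγ hK'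
  · -- F3
    have E : K' * (det2 (r - a) (y - a) * det2 (r - a) (x - a))
        = αn * (det2 (r - a) (x₁ - a) * det2 (r - a) (x - a))
          + βn * (det2 (r - a) (r₁ - a) * det2 (r - a) (x - a)) := by
      simp [hαdef, hβdef, hK'def, det2]; ring
    exact pos_aux2 E hx3 hr3 hα hβ hK'

/-- the target point is never inside its own crossing triangle -/
lemma target_not_ins {a x₁ w r' : Pt} (hx₁ : x₁ ∈ openSegment ℝ a w) :
    ¬Ins a x₁ r' w := by
  intro h
  have h0 : det2 (w - a) (x₁ - a) = 0 := det2_of_mem_openSegment hx₁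
  have e : det2 (x₁ - a) (w - a) = -det2 (w - a) (x₁ - a) := by simp [det2]; ring
  have : det2 (x₁ - a) (w - a) = 0 := by rw [e, h0]; ring
  have h1 := h.1
  rw [this, zero_mul] at h1
  exact lt_irrefl 0 h1
end Tri
section Key
set_option maxHeartbeats 1000000
open Aux
variable {P : Finset Pt} (T : Triangulation P)

lemma det2_smul (u v : Pt) (c : ℝ) : det2 u (c • v) = c * det2 u v := by
  simp only [det2, Aux.sub_fst, Aux.sub_snd, Aux.add_fst, Aux.add_snd, Aux.smul_fst, Aux.smul_snd]; ring

/-- core of the key lemma, concluding that the endpoint `q` is inside -/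
lemma key_aux (hgp : GenPos P) {a x r s p q z : Pt}
    (ha : a ∈ P) (hr : r ∈ P) (hs : s ∈ P) (hp : p ∈ P) (hq : q ∈ P)
    (hrsne : r ≠ s)
    (hrs : T.Adj r s) (hxrs : x ∈ openSegment ℝ r s)
    (hK : det2 (x - a) (r - a) ≠ 0)
    (hfirst : ∀ p' q', T.Adj p' q' → ∀ z' ∈ openSegment ℝ a x, z' ∉ openSegment ℝ p' q')
    (haxP : ∀ w ∈ P, w ∉ openSegment ℝ a x)
    (hpq : T.Adj p q) (hz2 : z ∈ openSegment ℝ p q)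
    (hZ1 : 0 < det2 (x - a) (z - a) * det2 (x - a) (r - a))
    (hZ2 : 0 < det2 (r - x) (z - x) * det2 (r - x) (a - x))
    (hZ3 : 0 ≤ det2 (r - a) (z - a) * det2 (r - a) (x - a))
    (hQ3 : 0 < det2 (r - a) (q - a) * det2 (r - a) (x - a)) :
    Ins a x r q := by
  have hC : det2 (r - x) (a - x) = det2 (x - a) (r - a) := det2_id1 a x r
  have hM : det2 (r - a) (x - a) = -det2 (x - a) (r - a) := det2_id2 a x r
  have hCne : det2 (r - x) (a - x) ≠ 0 := by rw [hC]; exact hK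
  have hMne : det2 (r - a) (x - a) ≠ 0 := by rw [hM]; exact neg_ne_zero.mpr hK
  have hxa : x ≠ a := by
    intro h; apply hK; rw [h]; simp only [det2, Aux.sub_fst, Aux.sub_snd, Aux.add_fst, Aux.add_snd, Aux.smul_fst, Aux.smul_snd]; ring
  have hrx : r ≠ x := by
    intro h; apply hCne; rw [h]; simp only [det2, Aux.sub_fst, Aux.sub_snd, Aux.add_fst, Aux.add_snd, Aux.smul_fst, Aux.smul_snd]; ring
  have hK2 : 0 < det2 (x - a) (r - a) ^ 2 := by positivity
  obtain ⟨μ, hμ0, hμ1, hze⟩ := mem_openSegment_iff.mp hz2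
  -- abbreviations
  set Z1 := det2 (x - a) (z - a) * det2 (x - a) (r - a) with hZ1d
  set Z2 := det2 (r - x) (z - x) * det2 (r - x) (a - x) with hZ2d
  set Z3 := det2 (r - a) (z - a) * det2 (r - a) (x - a) with hZ3d
  set Q1 := det2 (x - a) (q - a) * det2 (x - a) (r - a) with hQ1d
  set Q2 := det2 (r - x) (q - x) * det2 (r - x) (a - x) with hQ2d
  set Q3 := det2 (r - a) (q - a) * det2 (r - a) (x - a) with hQ3d
  -- if the edge pq coincides with rs we get a contradiction
  have pair_contra : ({p, q} : Set Pt) = {r, s} → False := by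
    intro hpair
    obtain ⟨ν, hν0, hν1, hxe⟩ := mem_openSegment_iff.mp hxrs
    have e1 : det2 (r - x) (r - x) = 0 := by simp only [det2, Aux.sub_fst, Aux.sub_snd, Aux.add_fst, Aux.add_snd, Aux.smul_fst, Aux.smul_snd]; ring
    have e2 : det2 (r - x) (s - x) = 0 := by rw [hxe]; simp only [det2, Aux.sub_fst, Aux.sub_snd, Aux.add_fst, Aux.add_snd, Aux.smul_fst, Aux.smul_snd]; ring
    have hps : det2 (r - x) (p - x) = 0 ∧ det2 (r - x) (q - x) = 0 := by
      rcases Set.pair_eq_pair_iff.mp hpair with ⟨rfl, rfl⟩ | ⟨rfl, rfl⟩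
      · exact ⟨e1, e2⟩
      · exact ⟨e2, e1⟩
    have eZ : det2 (r - x) (z - x)
        = (1 - μ) * det2 (r - x) (p - x) + μ * det2 (r - x) (q - x) := by
      rw [hze]; simp only [det2, Aux.sub_fst, Aux.sub_snd, Aux.add_fst, Aux.add_snd, Aux.smul_fst, Aux.smul_snd]; ring
    have hzero : Z2 = 0 := by rw [hZ2d, eZ, hps.1, hps.2]; ring
    rw [hzero] at hZ2
    exact lt_irrefl 0 hZ2
  -- conversion lemmas
  have conv1 : ∀ y : Pt, det2 (x - a) (y - a) = 0 →
      0 < det2 (r - x) (y - x) * det2 (r - x) (a - x) →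
      0 < det2 (r - a) (y - a) * det2 (r - a) (x - a) →
      y ∈ openSegment ℝ a x := by
    intro y h0 h2 h3
    obtain ⟨e, hye⟩ := exists_smul_of_det2 (sub_ne_zero.mpr hxa) h0
    have e3 : det2 (r - a) (y - a) = e * det2 (r - a) (x - a) := by
      rw [hye, det2_smul]
    have he0 : 0 < e := by
      rw [e3] at h3; nlinarith [sq_nonneg (det2 (r - a) (x - a)), h3, hMne.lt_or_gt]
    have hyx : y - x = (e - 1) • (x - a) := by
      rw [sub_smul, ← hye]; simp
    have e2 : det2 (r - x) (y - x) = (e - 1) * det2 (r - x) (x - a) := by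
      rw [hyx, det2_smul]
    have hf : det2 (r - x) (x - a) = -det2 (r - x) (a - x) := by simp only [det2, Aux.sub_fst, Aux.sub_snd, Aux.add_fst, Aux.add_snd, Aux.smul_fst, Aux.smul_snd]; ring
    have he1 : e < 1 := by
      rw [e2, hf] at h2
      nlinarith [h2, sq_nonneg (det2 (r - x) (a - x))]
    refine mem_openSegment_iff.mpr ⟨e, he0, he1, ?_⟩
    have := hye
    rw [sub_eq_iff_eq_add] at this
    rw [this]; abel
  have conv2 : ∀ y : Pt, det2 (r - x) (y - x) = 0 →
      0 < det2 (x - a) (y - a) * det2 (x - a) (r - a) →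
      0 < det2 (r - a) (y - a) * det2 (r - a) (x - a) →
      y ∈ openSegment ℝ x r := by
    intro y h0 h1 h3
    obtain ⟨e, hye⟩ := exists_smul_of_det2 (sub_ne_zero.mpr hrx) h0
    have hya : y - a = (x - a) + e • (r - x) := by
      rw [← hye]; abel
    have e1 : det2 (x - a) (y - a) = e * det2 (x - a) (r - a) := by
      rw [hya, det2_lin]
      have : det2 (x - a) (x - a) = 0 := by simp only [det2, Aux.sub_fst, Aux.sub_snd, Aux.add_fst, Aux.add_snd, Aux.smul_fst, Aux.smul_snd]; ring
      rw [this]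
      have : det2 (x - a) (r - x) = det2 (x - a) (r - a) := by simp only [det2, Aux.sub_fst, Aux.sub_snd, Aux.add_fst, Aux.add_snd, Aux.smul_fst, Aux.smul_snd]; ring
      rw [this]; ring
    have he0 : 0 < e := by
      rw [e1] at h1; nlinarith [h1]
    have e3 : det2 (r - a) (y - a) = (1 - e) * det2 (r - a) (x - a) := by
      rw [hya, det2_lin]
      have : det2 (r - a) (r - x) = -det2 (r - a) (x - a) := by simp only [det2, Aux.sub_fst, Aux.sub_snd, Aux.add_fst, Aux.add_snd, Aux.smul_fst, Aux.smul_snd]; ring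
      rw [this]; ring
    have he1 : e < 1 := by
      rw [e3] at h3
      nlinarith [h3, sq_nonneg (det2 (r - a) (x - a))]
    refine mem_openSegment_iff.mpr ⟨e, he0, he1, ?_⟩
    rw [sub_eq_iff_eq_add] at hye
    rw [hye]; abel
  have conv12 : ∀ y : Pt, det2 (x - a) (y - a) = 0 → det2 (r - x) (y - x) = 0 → y = x := by
    intro y h1 h2
    obtain ⟨e, hye⟩ := exists_smul_of_det2 (sub_ne_zero.mpr hxa) h1
    obtain ⟨e', hye'⟩ := exists_smul_of_det2 (sub_ne_zero.mpr hrx) h2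
    have hyx : y - x = (e - 1) • (x - a) := by rw [sub_smul, ← hye]; simp
    have : e' * det2 (x - a) (r - x) = 0 := by
      have h := congrArg (det2 (x - a)) hye'
      rw [det2_smul] at h
      rw [← h, hyx, det2_smul]
      have : det2 (x - a) (x - a) = 0 := by simp only [det2, Aux.sub_fst, Aux.sub_snd, Aux.add_fst, Aux.add_snd, Aux.smul_fst, Aux.smul_snd]; ring
      rw [this]; ring
    have hxr : det2 (x - a) (r - x) = det2 (x - a) (r - a) := by simp only [det2, Aux.sub_fst, Aux.sub_snd, Aux.add_fst, Aux.add_snd, Aux.smul_fst, Aux.smul_snd]; ring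
    rw [hxr] at this
    have he' : e' = 0 := by
      rcases mul_eq_zero.mp this with h | h
      · exact h
      · exact absurd h hK
    rw [he'] at hye'
    simp at hye'
    exact sub_eq_zero.mp hye'
  -- the master handler
  have handle : ∀ c : ℝ, 0 < c → c ≤ 1 →
      0 ≤ (1 - c) * Z1 + c * Q1 → 0 ≤ (1 - c) * Z2 + c * Q2 →
      ((1 - c) * Z1 + c * Q1 = 0 ∨ (1 - c) * Z2 + c * Q2 = 0) → False := by
    intro c hc0 hc1 hY1 hY2 hzero
    obtain ⟨y, hyd⟩ : ∃ y : Pt, y = z + c • (q - z) := ⟨_, rfl⟩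
    have eY1 : det2 (x - a) (y - a) * det2 (x - a) (r - a) = (1 - c) * Z1 + c * Q1 := by
      rw [hyd, hZ1d, hQ1d]; simp only [det2, Aux.sub_fst, Aux.sub_snd, Aux.add_fst, Aux.add_snd, Aux.smul_fst, Aux.smul_snd]; ring
    have eY2 : det2 (r - x) (y - x) * det2 (r - x) (a - x) = (1 - c) * Z2 + c * Q2 := by
      rw [hyd, hZ2d, hQ2d]; simp only [det2, Aux.sub_fst, Aux.sub_snd, Aux.add_fst, Aux.add_snd, Aux.smul_fst, Aux.smul_snd]; ring
    have eY3 : det2 (r - a) (y - a) * det2 (r - a) (x - a) = (1 - c) * Z3 + c * Q3 := by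
      rw [hyd, hZ3d, hQ3d]; simp only [det2, Aux.sub_fst, Aux.sub_snd, Aux.add_fst, Aux.add_snd, Aux.smul_fst, Aux.smul_snd]; ring
    have hY3 : 0 < det2 (r - a) (y - a) * det2 (r - a) (x - a) := by
      rw [eY3]; nlinarith
    -- location of y : either strictly between z and q, or equal to q
    have hyloc : y ∈ openSegment ℝ p q ∨ y = q := by
      rcases lt_or_eq_of_le hc1 with h | h
      · left
        exact openSegment_mid_trans hz2 (mem_openSegment_iff.mpr ⟨c, hc0, h, hyd⟩)
      · right
        rw [hyd, h]; apply pt_ext <;> simp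
    -- case analysis on which functional vanishes
    have hY1' : 0 ≤ det2 (x - a) (y - a) * det2 (x - a) (r - a) := by rw [eY1]; exact hY1
    have hY2' : 0 ≤ det2 (r - x) (y - x) * det2 (r - x) (a - x) := by rw [eY2]; exact hY2
    have hvan : det2 (x - a) (y - a) * det2 (x - a) (r - a) = 0 ∨
        det2 (r - x) (y - x) * det2 (r - x) (a - x) = 0 := by
      rcases hzero with h | h
      · left; rw [eY1, h]
      · right; rw [eY2, h]
    have hone_zero : det2 (x - a) (y - a) = 0 ∨ det2 (r - x) (y - x) = 0 := by
      rcases hvan with h | h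
      · left; rcases mul_eq_zero.mp h with h | h
        · exact h
        · exact absurd h hK
      · right; rcases mul_eq_zero.mp h with h | h
        · exact h
        · exact absurd h hCne
    by_cases hz1z : det2 (x - a) (y - a) = 0
    · by_cases hz2z : det2 (r - x) (y - x) = 0
      · -- y = x
        have hyx : y = x := conv12 y hz1z hz2z
        rcases hyloc with hmem | hyq
        · rw [hyx] at hmem
          exact pair_contra (T.noncross hpq hrs ⟨x, hmem, hxrs⟩)
        · rw [hyq] at hyx
          rw [← hyx] at hxrs
          exact no_P_in_open hgp hr hs hq hrsne hxrs
      · -- y on the open side (a,x)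
        have h2pos : 0 < det2 (r - x) (y - x) * det2 (r - x) (a - x) := by
          rcases lt_or_eq_of_le hY2' with h | h
          · exact h
          · exfalso; apply hz2z
            rcases mul_eq_zero.mp h.symm with h | h
            · exact h
            · exact absurd h hCne
        have hmem := conv1 y hz1z h2pos hY3
        rcases hyloc with hmem' | hyq
        · exact hfirst p q hpq y hmem hmem'
        · rw [hyq] at hmem
          exact haxP q hq hmem
    · -- then the second vanishes: y on the open side (x,r)
      have hz2z : det2 (r - x) (y - x) = 0 := by tauto
      have h1pos : 0 < det2 (x - a) (y - a) * det2 (x - a) (r - a) := by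
        rcases lt_or_eq_of_le hY1' with h | h
        · exact h
        · exfalso; apply hz1z
          rcases mul_eq_zero.mp h.symm with h | h
          · exact h
          · exact absurd h hK
      have hmem : y ∈ openSegment ℝ r s :=
        openSegment_right_trans hxrs (conv2 y hz2z h1pos hY3)
      rcases hyloc with hmem' | hyq
      · exact pair_contra (T.noncross hpq hrs ⟨y, hmem', hmem⟩)
      · rw [hyq] at hmem
        exact no_P_in_open hgp hr hs hq hrsne hmem
  -- final case analysis on the signs of Q1, Q2
  by_cases hQ1 : 0 < Q1
  · by_cases hQ2 : 0 < Q2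
    · exact ⟨hQ1, hQ2, hQ3⟩
    · push_neg at hQ2
      exfalso
      have hden : 0 < Z2 - Q2 := by linarith
      refine handle (Z2 / (Z2 - Q2)) (by positivity) ?_ ?_ ?_ (Or.inr ?_)
      · rw [div_le_one hden]; linarith
      · have hc0 : 0 < Z2 / (Z2 - Q2) := by positivity
        have hc1 : Z2 / (Z2 - Q2) ≤ 1 := by rw [div_le_one hden]; linarith
        nlinarith
      · have : (1 - Z2 / (Z2 - Q2)) * Z2 + (Z2 / (Z2 - Q2)) * Q2 = 0 := by
          field_simp; ring
        rw [this]
      · field_simp; ring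
  · push_neg at hQ1
    exfalso
    have hden1 : 0 < Z1 - Q1 := by linarith
    by_cases hQ2 : 0 < Q2
    · refine handle (Z1 / (Z1 - Q1)) (by positivity) ?_ ?_ ?_ (Or.inl ?_)
      · rw [div_le_one hden1]; linarith
      · have : (1 - Z1 / (Z1 - Q1)) * Z1 + (Z1 / (Z1 - Q1)) * Q1 = 0 := by field_simp; ring
        rw [this]
      · have hc0 : 0 < Z1 / (Z1 - Q1) := by positivity
        have hc1 : Z1 / (Z1 - Q1) ≤ 1 := by rw [div_le_one hden1]; linarith
        nlinarith
      · field_simp; ring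
    · push_neg at hQ2
      have hden2 : 0 < Z2 - Q2 := by linarith
      set c1 := Z1 / (Z1 - Q1) with hc1d
      set c2 := Z2 / (Z2 - Q2) with hc2d
      have hc10 : 0 < c1 := by rw [hc1d]; positivity
      have hc20 : 0 < c2 := by rw [hc2d]; positivity
      have hc11 : c1 ≤ 1 := by rw [hc1d, div_le_one hden1]; linarith
      have hc21 : c2 ≤ 1 := by rw [hc2d, div_le_one hden2]; linarith
      have hp1 : ∀ c : ℝ, 0 < c → c ≤ c1 → 0 ≤ (1 - c) * Z1 + c * Q1 := by
        intro c h0 hle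
        have : c * (Z1 - Q1) ≤ Z1 := by
          rw [hc1d, le_div_iff₀ hden1] at hle
          linarith
        nlinarith
      have hp2 : ∀ c : ℝ, 0 < c → c ≤ c2 → 0 ≤ (1 - c) * Z2 + c * Q2 := by
        intro c h0 hle
        have : c * (Z2 - Q2) ≤ Z2 := by
          rw [hc2d, le_div_iff₀ hden2] at hle
          linarith
        nlinarith
      have hz1eq : (1 - c1) * Z1 + c1 * Q1 = 0 := by rw [hc1d]; field_simp; ring
      have hz2eq : (1 - c2) * Z2 + c2 * Q2 = 0 := by rw [hc2d]; field_simp; ring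
      rcases le_total c1 c2 with h | h
      · exact handle c1 hc10 hc11 (hp1 c1 hc10 le_rfl) (hp2 c1 hc10 h) (Or.inl hz1eq)
      · exact handle c2 hc20 hc21 (hp1 c2 hc20 h) (hp2 c2 hc20 le_rfl) (Or.inr hz2eq)
end Key
section Main
open Aux
variable {P : Finset Pt} (T : Triangulation P)

lemma dot_sub_smul (u a w x : Pt) (t : ℝ) (h : x = a + t • (w - a)) :
    dot u (x - a) = t * dot u (w - a) := by
  rw [h]; simp [dot]; ring

lemma not_ins_self {a x r : Pt} : ¬Ins a x r a := by
  intro h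
  have e : det2 (x - a) (a - a) = 0 := by simp [det2]
  have h1 := h.1
  rw [e, zero_mul] at h1
  exact lt_irrefl 0 h1

/-- any edge crossing the segment from `a` to a target inside (or to r)
has an endpoint inside the triangle -/
lemma blocker_endpoint_ins (hgp : GenPos P) {a x r s tgt p q z : Pt}
    (ha : a ∈ P)
    (hrs : T.Adj r s) (hxrs : x ∈ openSegment ℝ r s)
    (hDa : det2 (s - r) (a - r) ≠ 0)
    (hfirst : ∀ p' q', T.Adj p' q' → ∀ z' ∈ openSegment ℝ a x, z' ∉ openSegment ℝ p' q')
    (haxP : ∀ w ∈ P, w ∉ openSegment ℝ a x)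
    (htgt : tgt ∈ P) (htne : a ≠ tgt) (hNadj : ¬T.Adj a tgt)
    (hcase : Ins a x r tgt ∨ tgt = r)
    (hpq : T.Adj p q) (hz1 : z ∈ openSegment ℝ a tgt) (hz2 : z ∈ openSegment ℝ p q) :
    Ins a x r p ∨ Ins a x r q := by
  have hK : det2 (x - a) (r - a) ≠ 0 := K_ne_zero hDa hxrs
  have hr : r ∈ P := T.mem_left hrs
  have hs : s ∈ P := T.mem_left (T.symm hrs)
  have hrsne : r ≠ s := T.ne hrs
  have hp : p ∈ P := T.mem_left hpq
  have hq : q ∈ P := T.mem_left (T.symm hpq)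
  have hends := cross_endpoints_ne T hgp ha htgt htne hNadj hpq hz1 hz2
  have hMne : det2 (r - a) (x - a) ≠ 0 := by
    rw [det2_id2]; exact neg_ne_zero.mpr hK
  have hM2 : 0 < det2 (r - a) (x - a) ^ 2 := by positivity
  have hK2 : 0 < det2 (x - a) (r - a) ^ 2 := by positivity
  obtain ⟨μ, hμ0, hμ1, hze⟩ := mem_openSegment_iff.mp hz2
  have eF3 : det2 (r - a) (z - a) = (1 - μ) * det2 (r - a) (p - a)
      + μ * det2 (r - a) (q - a) := by
    rw [hze]; simp [det2]; ring
  -- the three sign facts at z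
  have hG : 0 < det2 (x - a) (z - a) * det2 (x - a) (r - a) ∧
      0 < det2 (r - x) (z - x) * det2 (r - x) (a - x) ∧
      0 ≤ det2 (r - a) (z - a) * det2 (r - a) (x - a) := by
    rcases hcase with hIns | heq
    · have hzI := ins_open_left hK hIns hz1
      exact ⟨hzI.1, hzI.2.1, le_of_lt hzI.2.2⟩
    · rw [heq] at hz1
      obtain ⟨l, hl0, hl1, hzeq⟩ := mem_openSegment_iff.mp hz1
      have e1 : det2 (x - a) (z - a) = l * det2 (x - a) (r - a) := by
        rw [hzeq]; simp [det2]; ring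
      have e2 : det2 (r - x) (z - x) = (1 - l) * det2 (r - x) (a - x) := by
        rw [hzeq]; simp [det2]; ring
      have e3 : det2 (r - a) (z - a) = 0 := by
        rw [hzeq]; simp [det2]; ring
      have hCne : det2 (r - x) (a - x) ≠ 0 := by rw [det2_id1]; exact hK
      have hC2 : 0 < det2 (r - x) (a - x) ^ 2 := by positivity
      refine ⟨?_, ?_, ?_⟩
      · rw [e1]; nlinarith
      · rw [e2]; nlinarith
      · rw [e3, zero_mul]
  -- find the endpoint on the positive side of line (a,r)
  have hw : 0 < det2 (r - a) (q - a) * det2 (r - a) (x - a) ∨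
      0 < det2 (r - a) (p - a) * det2 (r - a) (x - a) := by
    by_contra hcon
    push_neg at hcon
    obtain ⟨hq3, hp3⟩ := hcon
    rcases hcase with hIns | heq
    · have h3 := (ins_open_left hK hIns hz1).2.2
      have e' : det2 (r - a) (z - a) * det2 (r - a) (x - a)
          = (1 - μ) * (det2 (r - a) (p - a) * det2 (r - a) (x - a))
            + μ * (det2 (r - a) (q - a) * det2 (r - a) (x - a)) := by
        linear_combination det2 (r - a) (x - a) * eF3
      have h1 : (1 - μ) * (det2 (r - a) (p - a) * det2 (r - a) (x - a)) ≤ 0 :=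
        mul_nonpos_iff.mpr (Or.inl ⟨by linarith, hp3⟩)
      have h2 : μ * (det2 (r - a) (q - a) * det2 (r - a) (x - a)) ≤ 0 :=
        mul_nonpos_iff.mpr (Or.inl ⟨hμ0.le, hq3⟩)
      linarith
    · -- tgt = r : both must vanish, contradicting general position
      rw [heq] at hz1 hends
      have hzero : det2 (r - a) (z - a) = 0 := by
        obtain ⟨l, hl0, hl1, hzeq⟩ := mem_openSegment_iff.mp hz1
        rw [hzeq]; simp [det2]; ring
      have hsum : (1 - μ) * (det2 (r - a) (p - a) * det2 (r - a) (x - a))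
          + μ * (det2 (r - a) (q - a) * det2 (r - a) (x - a)) = 0 := by
        linear_combination det2 (r - a) (x - a) * hzero - det2 (r - a) (x - a) * eF3
      have hp0 : det2 (r - a) (p - a) * det2 (r - a) (x - a) = 0 := by
        by_contra hne0
        have hlt : det2 (r - a) (p - a) * det2 (r - a) (x - a) < 0 :=
          lt_of_le_of_ne hp3 hne0
        have h1 : (1 - μ) * (det2 (r - a) (p - a) * det2 (r - a) (x - a)) < 0 :=
          mul_neg_of_pos_of_neg (by linarith) hlt
        have h2 : μ * (det2 (r - a) (q - a) * det2 (r - a) (x - a)) ≤ 0 :=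
          mul_nonpos_iff.mpr (Or.inl ⟨hμ0.le, hq3⟩)
        linarith
      have hpz : det2 (r - a) (p - a) = 0 := by
        rcases mul_eq_zero.mp hp0 with h | h
        · exact h
        · exact absurd h hMne
      have har : a ≠ r := by
        intro h; apply hK; rw [← h]; simp [det2]
      exact gp_det hgp ha hr hp har (Ne.symm hends.1) (Ne.symm hends.2.1) hpz
  rcases hw with h | h
  · right
    exact key_aux T hgp ha hr hs hp hq hrsne hrs hxrs hK hfirst haxP hpq hz2
      hG.1 hG.2.1 hG.2.2 h
  · left
    rw [openSegment_symm] at hz2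
    exact key_aux T hgp ha hr hs hq hp hrsne hrs hxrs hK hfirst haxP (T.symm hpq) hz2
      hG.1 hG.2.1 hG.2.2 h

/-- recursion on the number of points inside the triangle -/
lemma inner_rec (hgp : GenPos P) {u a : Pt} (ha : a ∈ P) :
    ∀ n : ℕ, ∀ x r s : Pt,
    T.Adj r s → x ∈ openSegment ℝ r s → det2 (s - r) (a - r) ≠ 0 →
    (∀ p' q', T.Adj p' q' → ∀ z' ∈ openSegment ℝ a x, z' ∉ openSegment ℝ p' q') →
    (∀ w ∈ P, w ∉ openSegment ℝ a x) →
    0 < dot u (x - a) → 0 < dot u (r - a) →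
    (P.filter (fun y => Ins a x r y)).card ≤ n →
    ∃ b ∈ P, T.Adj a b ∧ 0 < dot u (b - a) := by
  intro n
  induction n with
  | zero =>
    intro x r s hrs hxrs hDa hfirst haxP hdx hdr hcard
    have hK : det2 (x - a) (r - a) ≠ 0 := K_ne_zero hDa hxrs
    have hr : r ∈ P := T.mem_left hrs
    have har : a ≠ r := by intro h; apply hK; rw [← h]; simp [det2]
    by_cases hadj : T.Adj a r
    · exact ⟨r, hr, hadj, hdr⟩
    obtain ⟨p, q, hpq, hpairne, z, hz1, hz2⟩ := T.maximal a ha r hr har hadj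
    have hw := blocker_endpoint_ins T hgp ha hrs hxrs hDa hfirst haxP hr har hadj
      (Or.inr rfl) hpq hz1 hz2
    exfalso
    obtain ⟨w, hwP, hwIns⟩ : ∃ w, w ∈ P ∧ Ins a x r w := by
      rcases hw with h | h
      · exact ⟨p, T.mem_left hpq, h⟩
      · exact ⟨q, T.mem_left (T.symm hpq), h⟩
    have hmem : w ∈ P.filter (fun y => Ins a x r y) := Finset.mem_filter.mpr ⟨hwP, hwIns⟩
    have := Finset.card_pos.mpr ⟨w, hmem⟩
    omega
  | succ n IH =>
    intro x r s hrs hxrs hDa hfirst haxP hdx hdr hcard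
    have hK : det2 (x - a) (r - a) ≠ 0 := K_ne_zero hDa hxrs
    have hr : r ∈ P := T.mem_left hrs
    have har : a ≠ r := by intro h; apply hK; rw [← h]; simp [det2]
    by_cases hadj : T.Adj a r
    · exact ⟨r, hr, hadj, hdr⟩
    obtain ⟨p, q, hpq, hpairne, z, hz1, hz2⟩ := T.maximal a ha r hr har hadj
    have hw := blocker_endpoint_ins T hgp ha hrs hxrs hDa hfirst haxP hr har hadj
      (Or.inr rfl) hpq hz1 hz2
    obtain ⟨w, hwP, hwIns⟩ : ∃ w, w ∈ P ∧ Ins a x r w := by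
      rcases hw with h | h
      · exact ⟨p, T.mem_left hpq, h⟩
      · exact ⟨q, T.mem_left (T.symm hpq), h⟩
    have hwdot : 0 < dot u (w - a) := ins_dot hK hwIns hdx hdr
    by_cases hadjw : T.Adj a w
    · exact ⟨w, hwP, hadjw, hwdot⟩
    have hawne : a ≠ w := by
      intro h; rw [← h] at hwIns; exact not_ins_self hwIns
    obtain ⟨x₁, r₁, s₁, hrs₁, hx₁rs, hx₁aw, hfirst₁⟩ :=
      exists_first_crossing T hgp ha hwP hawne hadjw
    have hends₁ := cross_endpoints_ne T hgp ha hwP hawne hadjw hrs₁ hx₁aw hx₁rs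
    have hw' := blocker_endpoint_ins T hgp ha hrs hxrs hDa hfirst haxP hwP hawne hadjw
      (Or.inl hwIns) hrs₁ hx₁aw hx₁rs
    -- choose the interior endpoint as the new r
    obtain ⟨r', s', hrs', hx₁rs', hr'Ins, hr'ne, hs'ne⟩ :
        ∃ r' s', T.Adj r' s' ∧ x₁ ∈ openSegment ℝ r' s' ∧ Ins a x r r' ∧
          r' ≠ a ∧ s' ≠ a := by
      rcases hw' with h | h
      · exact ⟨r₁, s₁, hrs₁, hx₁rs, h, hends₁.1, hends₁.2.2.1⟩
      · refine ⟨s₁, r₁, T.symm hrs₁, ?_, h, hends₁.2.2.1, hends₁.1⟩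
        rwa [openSegment_symm]
    have hr' : r' ∈ P := T.mem_left hrs'
    have hs' : s' ∈ P := T.mem_left (T.symm hrs')
    have hDa' : det2 (s' - r') (a - r') ≠ 0 :=
      gp_det hgp hr' hs' ha (T.ne hrs') hr'ne hs'ne
    have hK' : det2 (x₁ - a) (r' - a) ≠ 0 := K_ne_zero hDa' hx₁rs'
    have haxP₁ : ∀ w' ∈ P, w' ∉ openSegment ℝ a x₁ := by
      intro w' hw'P hmem
      exact no_P_in_open hgp ha hwP hw'P hawne (openSegment_left_trans hx₁aw hmem)
    have hdx₁ : 0 < dot u (x₁ - a) := by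
      obtain ⟨t, ht0, ht1, hx₁e⟩ := mem_openSegment_iff.mp hx₁aw
      rw [dot_sub_smul u a w x₁ t hx₁e]
      exact mul_pos ht0 hwdot
    have hdr' : 0 < dot u (r' - a) := ins_dot hK hr'Ins hdx hdr
    have hx₁Ins : Ins a x r x₁ := ins_open_left hK hwIns hx₁aw
    have hwmem : w ∈ P.filter (fun y => Ins a x r y) := Finset.mem_filter.mpr ⟨hwP, hwIns⟩
    have hcard' : (P.filter (fun y => Ins a x₁ r' y)).card ≤ n := by
      have hsub : P.filter (fun y => Ins a x₁ r' y) ⊆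
          (P.filter (fun y => Ins a x r y)).erase w := by
        intro y hy
        obtain ⟨hyP, hyIns'⟩ := Finset.mem_filter.mp hy
        refine Finset.mem_erase.mpr ⟨?_, Finset.mem_filter.mpr ⟨hyP, ?_⟩⟩
        · intro h; rw [h] at hyIns'; exact target_not_ins hx₁aw hyIns'
        · exact ins_sub hK hK' hx₁Ins hr'Ins hyIns'
      have h1 := Finset.card_le_card hsub
      have h2 := Finset.card_erase_of_mem hwmem
      omega
    exact IH x₁ r' s' hrs' hx₁rs' hDa' hfirst₁ haxP₁ hdx₁ hdr' hcard'

/-- main lemma: a sees a neighbour strictly on the positive side of any direction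
that has a point of P on its positive side -/
lemma exists_adj_dot_pos (hgp : GenPos P) {u a c0 : Pt} (ha : a ∈ P) (hc0 : c0 ∈ P)
    (hdc : 0 < dot u (c0 - a)) : ∃ b ∈ P, T.Adj a b ∧ 0 < dot u (b - a) := by
  have hane : a ≠ c0 := by
    intro h
    rw [h] at hdc
    have : dot u (c0 - c0) = 0 := by simp [dot]
    linarith
  by_cases hadj : T.Adj a c0
  · exact ⟨c0, hc0, hadj, hdc⟩
  obtain ⟨x, r, s, hrs, hxrs, hxac, hfirst⟩ := exists_first_crossing T hgp ha hc0 hane hadj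
  have hends := cross_endpoints_ne T hgp ha hc0 hane hadj hrs hxac hxrs
  have hr : r ∈ P := T.mem_left hrs
  have hs : s ∈ P := T.mem_left (T.symm hrs)
  have hrsne : r ≠ s := T.ne hrs
  have hdx : 0 < dot u (x - a) := by
    obtain ⟨t, ht0, ht1, hxe⟩ := mem_openSegment_iff.mp hxac
    rw [dot_sub_smul u a c0 x t hxe]
    exact mul_pos ht0 hdc
  have haxP : ∀ w ∈ P, w ∉ openSegment ℝ a x := by
    intro w hwP hmem
    exact no_P_in_open hgp ha hc0 hwP hane (openSegment_left_trans hxac hmem)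
  have hrdot : 0 < dot u (r - a) ∨ 0 < dot u (s - a) := by
    obtain ⟨ν, hν0, hν1, hxe⟩ := mem_openSegment_iff.mp hxrs
    have e : dot u (x - a) = (1 - ν) * dot u (r - a) + ν * dot u (s - a) := by
      rw [hxe]; simp [dot]; ring
    by_contra hcon
    push_neg at hcon
    nlinarith [hcon.1, hcon.2]
  rcases hrdot with h | h
  · have hDa : det2 (s - r) (a - r) ≠ 0 :=
      gp_det hgp hr hs ha hrsne hends.1 hends.2.2.1
    exact inner_rec T hgp ha (P.filter (fun y => Ins a x r y)).card x r s
      hrs hxrs hDa hfirst haxP hdx h le_rfl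
  · have hDa : det2 (r - s) (a - s) ≠ 0 :=
      gp_det hgp hs hr ha (Ne.symm hrsne) hends.2.2.1 hends.1
    have hxrs' : x ∈ openSegment ℝ s r := by rwa [openSegment_symm]
    exact inner_rec T hgp ha (P.filter (fun y => Ins a x s y)).card x s r
      (T.symm hrs) hxrs' hDa hfirst haxP hdx h le_rfl
end Main
section Dir
open Aux

lemma dot_sub (u p q : Pt) : dot u (p - q) = dot u p - dot u q := by simp [dot]; ring

lemma solve2 (d1 d2 : Pt) (hD : det2 d1 d2 ≠ 0) :
    ∃ u0 : Pt, dot u0 d1 = 1 ∧ dot u0 d2 = 1 := by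
  have hD' : d1.1 * d2.2 - d1.2 * d2.1 ≠ 0 := by simpa [det2] using hD
  refine ⟨((d2.2 - d1.2) / (d1.1 * d2.2 - d1.2 * d2.1),
           (d1.1 - d2.1) / (d1.1 * d2.2 - d1.2 * d2.1)), ?_, ?_⟩
  · show (d2.2 - d1.2) / (d1.1 * d2.2 - d1.2 * d2.1) * d1.1
      + (d1.1 - d2.1) / (d1.1 * d2.2 - d1.2 * d2.1) * d1.2 = 1
    rw [div_mul_eq_mul_div, div_mul_eq_mul_div, ← add_div, div_eq_one_iff_eq hD']
    ring
  · show (d2.2 - d1.2) / (d1.1 * d2.2 - d1.2 * d2.1) * d2.1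
      + (d1.1 - d2.1) / (d1.1 * d2.2 - d1.2 * d2.1) * d2.2 = 1
    rw [div_mul_eq_mul_div, div_mul_eq_mul_div, ← add_div, div_eq_one_iff_eq hD']
    ring

/-- a direction positive on two independent vectors and injective on Q -/
lemma exists_good_dir (Q : Finset Pt) (d1 d2 : Pt) (hD : det2 d1 d2 ≠ 0) :
    ∃ u : Pt, 0 < dot u d1 ∧ 0 < dot u d2 ∧
      ∀ p ∈ Q, ∀ q ∈ Q, dot u p = dot u q → p = q := by
  classical
  obtain ⟨u0, hd1, hd2⟩ := solve2 d1 d2 hD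
  set w : Pt := (-u0.2, u0.1) with hw
  have hu0ne : u0 ≠ 0 := by
    intro h; rw [h] at hd1; simp [dot] at hd1
  have hsq : 0 < u0.1 ^ 2 + u0.2 ^ 2 := by
    by_contra hcon
    push_neg at hcon
    have h1 : u0.1 = 0 := by nlinarith [sq_nonneg u0.1, sq_nonneg u0.2]
    have h2 : u0.2 = 0 := by nlinarith [sq_nonneg u0.1, sq_nonneg u0.2]
    exact hu0ne (pt_ext (by simp [h1]) (by simp [h2]))
  have hspan : ∀ c : Pt, dot u0 c = 0 → dot w c = 0 → c = 0 := by
    intro c h1 h2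
    rw [hw] at h2
    simp [dot] at h1 h2
    have hc1 : (u0.1 ^ 2 + u0.2 ^ 2) * c.1 = 0 := by
      linear_combination u0.1 * h1 - u0.2 * h2
    have hc2 : (u0.1 ^ 2 + u0.2 ^ 2) * c.2 = 0 := by
      linear_combination u0.2 * h1 + u0.1 * h2
    have e1 : c.1 = 0 := by
      rcases mul_eq_zero.mp hc1 with h | h
      · exfalso; rw [h] at hsq; exact lt_irrefl 0 hsq
      · exact h
    have e2 : c.2 = 0 := by
      rcases mul_eq_zero.mp hc2 with h | h
      · exfalso; rw [h] at hsq; exact lt_irrefl 0 hsq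
      · exact h
    exact pt_ext (by simp [e1]) (by simp [e2])
  set B : Finset ℝ := ((Q ×ˢ Q).filter (fun e => e.1 ≠ e.2)).image
      (fun e => -(dot u0 (e.1 - e.2)) / (dot w (e.1 - e.2))) with hB
  set X := |dot w d1| with hX
  set Y := |dot w d2| with hY
  have hXnn : 0 ≤ X := abs_nonneg _
  have hYnn : 0 ≤ Y := abs_nonneg _
  set δ := 1 / (1 + X + Y) with hδd
  have hδ : 0 < δ := by rw [hδd]; positivity
  obtain ⟨t, htIoo, htB⟩ :=
    (Set.infinite_coe_iff.mp (Set.Ioo.infinite hδ)).exists_notMem_finset B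
  obtain ⟨ht0, htδ⟩ := htIoo
  have hδ1 : δ * (1 + X + Y) = 1 := by rw [hδd]; field_simp
  refine ⟨u0 + t • w, ?_, ?_, ?_⟩
  · have e : dot (u0 + t • w) d1 = dot u0 d1 + t * dot w d1 := by simp [dot]; ring
    rw [e, hd1]
    have h1 : dot w d1 ≥ -X := by rw [hX]; exact neg_abs_le _
    have h2 : t * X < 1 := by nlinarith
    nlinarith
  · have e : dot (u0 + t • w) d2 = dot u0 d2 + t * dot w d2 := by simp [dot]; ring
    rw [e, hd2]
    have h1 : dot w d2 ≥ -Y := by rw [hY]; exact neg_abs_le _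
    have h2 : t * Y < 1 := by nlinarith
    nlinarith
  · intro p hp q hq hpq
    by_contra hne
    have heq : dot u0 (p - q) + t * dot w (p - q) = 0 := by
      have e : dot (u0 + t • w) (p - q)
          = dot u0 (p - q) + t * dot w (p - q) := by simp [dot]; ring
      rw [← e, dot_sub, hpq]; ring
    by_cases hwc : dot w (p - q) = 0
    · have h0 : dot u0 (p - q) = 0 := by rw [hwc] at heq; linarith
      exact hne (sub_eq_zero.mp (hspan _ h0 hwc))
    · apply htB
      rw [hB]
      apply Finset.mem_image.mpr
      refine ⟨(p, q), Finset.mem_filter.mpr ⟨Finset.mem_product.mpr ⟨hp, hq⟩, hne⟩, ?_⟩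
      show -(dot u0 (p - q)) / (dot w (p - q)) = t
      field_simp
      linarith
end Dir
section Final
open Aux
variable {P : Finset Pt} (T : Triangulation P)

lemma reach_top (hgp : GenPos P) {u : Pt}
    (hinj : ∀ p ∈ P, ∀ q ∈ P, dot u p = dot u q → p = q)
    {m : Pt} (hmP : m ∈ P) (hm : ∀ p ∈ P, dot u p ≤ dot u m)
    (S : Finset {x // x ∈ P}) :
    ∀ n : ℕ, ∀ (a : Pt) (haP : a ∈ P),
      (P.filter (fun p => dot u a < dot u p)).card ≤ n →
      (∀ w ∈ S, dot u (w : Pt) < dot u a) →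
      ∀ (haS : (⟨a, haP⟩ : {x // x ∈ P}) ∈ ((↑S : Set {x // x ∈ P})ᶜ))
        (hmS : (⟨m, hmP⟩ : {x // x ∈ P}) ∈ ((↑S : Set {x // x ∈ P})ᶜ)),
      (SimpleGraph.induce ((↑S : Set {x // x ∈ P})ᶜ) T.toPlaneGraph.graph).Reachable
        ⟨⟨a, haP⟩, haS⟩ ⟨⟨m, hmP⟩, hmS⟩ := by
  intro n
  induction n with
  | zero =>
    intro a haP hcard hSlow haS hmS
    rcases eq_or_ne a m with h | h
    · have he : (⟨⟨a, haP⟩, haS⟩ : ((↑S : Set {x // x ∈ P})ᶜ : Set _))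
          = ⟨⟨m, hmP⟩, hmS⟩ := by subst h; rfl
      rw [he]
    · exfalso
      have hlt : dot u a < dot u m :=
        lt_of_le_of_ne (hm a haP) (fun he => h (hinj a haP m hmP he))
      have hmem : m ∈ P.filter (fun p => dot u a < dot u p) :=
        Finset.mem_filter.mpr ⟨hmP, hlt⟩
      have := Finset.card_pos.mpr ⟨m, hmem⟩
      omega
  | succ n IH =>
    intro a haP hcard hSlow haS hmS
    rcases eq_or_ne a m with h | h
    · have he : (⟨⟨a, haP⟩, haS⟩ : ((↑S : Set {x // x ∈ P})ᶜ : Set _))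
          = ⟨⟨m, hmP⟩, hmS⟩ := by subst h; rfl
      rw [he]
    · have hlt : dot u a < dot u m :=
        lt_of_le_of_ne (hm a haP) (fun he => h (hinj a haP m hmP he))
      have hdc : 0 < dot u (m - a) := by rw [dot_sub]; linarith
      obtain ⟨b, hbP, hadj, hbdot⟩ := exists_adj_dot_pos T hgp haP hmP hdc
      have hab : dot u a < dot u b := by rw [dot_sub] at hbdot; linarith
      have hSlow' : ∀ w ∈ S, dot u (w : Pt) < dot u b :=
        fun w hw => lt_trans (hSlow w hw) hab
      have hbS : (⟨b, hbP⟩ : {x // x ∈ P}) ∈ ((↑S : Set {x // x ∈ P})ᶜ) := by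
        intro hmem
        exact lt_irrefl _ (hSlow' ⟨b, hbP⟩ (Finset.mem_coe.mp hmem))
      have hbfil : b ∈ P.filter (fun p => dot u a < dot u p) :=
        Finset.mem_filter.mpr ⟨hbP, hab⟩
      have hcard' : (P.filter (fun p => dot u b < dot u p)).card ≤ n := by
        have hsub : P.filter (fun p => dot u b < dot u p) ⊆
            (P.filter (fun p => dot u a < dot u p)).erase b := by
          intro y hy
          obtain ⟨hyP, hy2⟩ := Finset.mem_filter.mp hy
          refine Finset.mem_erase.mpr ⟨?_, Finset.mem_filter.mpr ⟨hyP, lt_trans hab hy2⟩⟩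
          intro hyb
          rw [hyb] at hy2
          exact lt_irrefl _ hy2
        have h1 := Finset.card_le_card hsub
        have h2 := Finset.card_erase_of_mem hbfil
        omega
      have hstep : (SimpleGraph.induce ((↑S : Set {x // x ∈ P})ᶜ)
          T.toPlaneGraph.graph).Adj ⟨⟨a, haP⟩, haS⟩ ⟨⟨b, hbP⟩, hbS⟩ := hadj
      exact hstep.reachable.trans (IH b hbP hcard' hSlow' hbS hmS)
end Final
/-- every triangulation of a set of at least 3 points in general
position is 2-connected as an abstract graph. -/
theorem triangulation_two_connected (P : Finset Pt) (hgp : GenPos P)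
    (hcard : 3 ≤ P.card) (T : Triangulation P) :
    KConnected T.toPlaneGraph.graph 2 := by
  classical
  open Aux in
  constructor
  · rw [Fintype.card_coe]; omega
  · intro S hS
    have hS1 : S.card ≤ 1 := by omega
    rw [SimpleGraph.connected_iff]
    constructor
    · -- preconnected
      intro v₁ v₂
      obtain ⟨⟨a, haP⟩, haS⟩ := v₁
      obtain ⟨⟨b, hbP⟩, hbS⟩ := v₂
      rcases eq_or_ne a b with hab | hab
      · have : (⟨⟨a, haP⟩, haS⟩ : ((↑S : Set {x // x ∈ P})ᶜ : Set _))
            = ⟨⟨b, hbP⟩, hbS⟩ := by subst hab; rfl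
        rw [this]
      · obtain ⟨u, hua, hub, hinj⟩ : ∃ u : Pt,
            (∀ w ∈ S, Aux.dot u (↑w : Pt) < Aux.dot u a) ∧
            (∀ w ∈ S, Aux.dot u (↑w : Pt) < Aux.dot u b) ∧
            (∀ p ∈ P, ∀ q ∈ P, Aux.dot u p = Aux.dot u q → p = q) := by
          rcases S.eq_empty_or_nonempty with hSe | ⟨v0, hv0⟩
          · obtain ⟨u, _, _, hinj⟩ := exists_good_dir P ((1 : ℝ), (0 : ℝ))
              ((0 : ℝ), (1 : ℝ)) (by norm_num [det2])
            exact ⟨u, by simp [hSe], by simp [hSe], hinj⟩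
          · have hSone : ∀ w ∈ S, w = v0 := fun w hw =>
              Finset.card_le_one.mp hS1 w hw v0 hv0
            have hcP : (v0 : Pt) ∈ P := v0.2
            have hac : (v0 : Pt) ≠ a := by
              intro h
              apply haS
              apply Finset.mem_coe.mpr
              have : v0 = ⟨a, haP⟩ := Subtype.ext h
              rwa [this] at hv0
            have hbc : (v0 : Pt) ≠ b := by
              intro h
              apply hbS
              apply Finset.mem_coe.mpr
              have : v0 = ⟨b, hbP⟩ := Subtype.ext h
              rwa [this] at hv0
            have hD : det2 (a - (v0 : Pt)) (b - (v0 : Pt)) ≠ 0 :=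
              gp_det hgp hcP haP hbP hac hbc hab
            obtain ⟨u, h1, h2, hinj⟩ := exists_good_dir P (a - (v0 : Pt)) (b - (v0 : Pt)) hD
            rw [dot_sub] at h1 h2
            refine ⟨u, ?_, ?_, hinj⟩
            · intro w hw; rw [hSone w hw]; linarith
            · intro w hw; rw [hSone w hw]; linarith
        obtain ⟨m, hmP, hm⟩ := P.exists_max_image (Aux.dot u) ⟨a, haP⟩
        have hmS : (⟨m, hmP⟩ : {x // x ∈ P}) ∈ ((↑S : Set {x // x ∈ P})ᶜ) := by
          intro hmem
          have h1 := hua ⟨m, hmP⟩ (Finset.mem_coe.mp hmem)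
          have h2 := hm a haP
          exact lt_irrefl _ (lt_of_lt_of_le h1 h2)
        have r1 := reach_top T hgp hinj hmP hm S
          (P.filter (fun p => Aux.dot u a < Aux.dot u p)).card a haP le_rfl hua haS hmS
        have r2 := reach_top T hgp hinj hmP hm S
          (P.filter (fun p => Aux.dot u b < Aux.dot u p)).card b hbP le_rfl hub hbS hmS
        exact r1.trans r2.symm
    · -- nonempty
      have hcompl : 2 ≤ Sᶜ.card := by
        have := Finset.card_compl S
        rw [Fintype.card_coe] at this
        omega
      obtain ⟨v, hv⟩ := Finset.card_pos.mp (by omega : 0 < Sᶜ.card)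
      exact ⟨⟨v, by simpa using Finset.mem_compl.mp hv⟩⟩
end
end

section
/- Let T be a 4-connected triangulation of a finite point set P in the plane in general position. Then no two inward triangles of T have the same inward vertex; that is, every point of P in the interior of CH(P) is the inward vertex of at most one inward triangle of T. -/
open scoped Classical

noncomputable section

-- basic algebra
lemma det2_self (u : Pt) : det2 u u = 0 := by simp [det2]; ring

lemma det2_antisymm (u v : Pt) : det2 u v = - det2 v u := by simp [det2]; ring

lemma exists_smul_of_det2_eq_zero {u v : Pt} (hu : u ≠ 0) (h : det2 u v = 0) :
    ∃ s : ℝ, v = s • u := by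
  by_cases h1 : u.1 = 0
  · have h2 : u.2 ≠ 0 := by
      intro h2; exact hu (Prod.ext h1 h2)
    have hz : u.2 * v.1 = 0 := by have h9 := h; simp only [det2, h1, zero_mul] at h9; linarith
    have hv1 : v.1 = 0 := by
      rcases mul_eq_zero.1 hz with h'' | h''
      · exact absurd h'' h2
      · exact h''
    refine ⟨v.2 / u.2, ?_⟩
    apply Prod.ext <;> simp [hv1, h1] <;> field_simp
  · refine ⟨v.1 / u.1, ?_⟩
    have : u.1 * v.2 = u.2 * v.1 := by simp [det2] at h; linarith
    apply Prod.ext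
    · simp only [Prod.smul_fst, smul_eq_mul]; rw [div_mul_cancel₀ _ h1]
    · simp only [Prod.smul_snd, smul_eq_mul]; rw [div_mul_eq_mul_div, eq_div_iff h1]; linarith

lemma det2_smul_pair (s t : ℝ) (v : Pt) : det2 (s • v) (t • v) = 0 := by
  simp [det2, Prod.smul_fst, Prod.smul_snd, smul_eq_mul]; ring

lemma collinear_iff_det2 {p q r : Pt} :
    Collinear ℝ ({p, q, r} : Set Pt) ↔ det2 (q - p) (r - p) = 0 := by
  constructor
  · intro h
    have hp : p ∈ ({p, q, r} : Set Pt) := by simp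
    rw [collinear_iff_of_mem hp] at h
    obtain ⟨v, hv⟩ := h
    obtain ⟨sq, hsq⟩ := hv q (by simp)
    obtain ⟨sr, hsr⟩ := hv r (by simp)
    have hq : q - p = sq • v := by rw [hsq]; abel_nf; simp
    have hr : r - p = sr • v := by rw [hsr]; abel_nf; simp
    rw [hq, hr]; exact det2_smul_pair sq sr v
  · intro h
    by_cases hqp : q - p = 0
    · have hqp2 : q = p := by rwa [sub_eq_zero] at hqp
      have hset : ({p, q, r} : Set Pt) = {p, r} := by rw [hqp2]; simp
      rw [hset]
      exact collinear_pair ℝ p r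
    · obtain ⟨s, hs⟩ := exists_smul_of_det2_eq_zero hqp h
      rw [collinear_iff_of_mem (show p ∈ ({p, q, r} : Set Pt) by simp)]
      refine ⟨q - p, ?_⟩
      intro x hx
      rcases hx with h1 | h1 | h1
      · exact ⟨0, by simp [h1]⟩
      · refine ⟨1, by simp [h1]⟩
      · refine ⟨s, ?_⟩
        subst h1
        rw [← hs]
        simp

lemma genPos_det2 {P : Finset Pt} (hgp : GenPos P) {p q r : Pt}
    (hp : p ∈ P) (hq : q ∈ P) (hr : r ∈ P)
    (hpq : p ≠ q) (hpr : p ≠ r) (hqr : q ≠ r) :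
    det2 (q - p) (r - p) ≠ 0 := by
  intro h
  exact hgp p hp q hq r hr hpq hpr hqr (collinear_iff_det2.2 h)

lemma det2_plucker (x y z w : Pt) :
    det2 x y * det2 z w - det2 x z * det2 y w + det2 x w * det2 y z = 0 := by
  simp [det2]; ring

lemma det2_smul_left (s : ℝ) (u v : Pt) : det2 (s • u) v = s * det2 u v := by
  simp [det2, Prod.smul_fst, Prod.smul_snd, smul_eq_mul]; ring

lemma det2_combo (u x y a : Pt) (t : ℝ) :
    det2 u (((1 - t) • x + t • y) - a) =
      (1 - t) * det2 u (x - a) + t * det2 u (y - a) := by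
  simp [det2, Prod.smul_fst, Prod.smul_snd, smul_eq_mul, Prod.fst_add, Prod.snd_add,
    Prod.fst_sub, Prod.snd_sub]
  ring

lemma det2_combo' (u x y a : Pt) (t : ℝ) :
    det2 (((1 - t) • x + t • y) - a) u =
      (1 - t) * det2 (x - a) u + t * det2 (y - a) u := by
  simp [det2, Prod.smul_fst, Prod.smul_snd, smul_eq_mul, Prod.fst_add, Prod.snd_add,
    Prod.fst_sub, Prod.snd_sub]
  ring

-- if a combination of w1,w2 equals z with z on a line through both, collinearity:
lemma collinear_of_combo {w1 w2 z : Pt} {t : ℝ}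
    (h : (1 - t) • w1 + t • w2 = z) : det2 (w1 - z) (w2 - z) = 0 := by
  have h1 : w1.1 - z.1 = w1.1 - ((1-t) * w1.1 + t * w2.1) := by
    rw [← h]; simp [Prod.fst_add, Prod.smul_fst, smul_eq_mul]
  have h2 : w1.2 - z.2 = w1.2 - ((1-t) * w1.2 + t * w2.2) := by
    rw [← h]; simp [Prod.snd_add, Prod.smul_snd, smul_eq_mul]
  have h3 : w2.1 - z.1 = w2.1 - ((1-t) * w1.1 + t * w2.1) := by
    rw [← h]; simp [Prod.fst_add, Prod.smul_fst, smul_eq_mul]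
  have h4 : w2.2 - z.2 = w2.2 - ((1-t) * w1.2 + t * w2.2) := by
    rw [← h]; simp [Prod.snd_add, Prod.smul_snd, smul_eq_mul]
  simp only [det2, Prod.fst_sub, Prod.snd_sub, h1, h2, h3, h4]
  ring


lemma hullVx_mem {P : Finset Pt} {v : Pt} (h : v ∈ hullVx P) : v ∈ P :=
  (Finset.mem_filter.1 h).1

lemma hullVx_not_mem_hull {P : Finset Pt} {v : Pt} (h : v ∈ hullVx P) :
    v ∉ convexHull ℝ ((P.erase v : Finset Pt) : Set Pt) :=
  (Finset.mem_filter.1 h).2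

lemma hullVx_not_interior {P : Finset Pt} {v : Pt} (hv : v ∈ hullVx P)
    {w : Pt} (hw : w ∈ P) (hwv : w ≠ v) :
    v ∉ interior (convexHull ℝ (P : Set Pt)) := by
  intro hvI
  have hvP := hullVx_mem hv
  have hv2 := hullVx_not_mem_hull hv
  have hwE : w ∈ (P.erase v : Finset Pt) := Finset.mem_erase.2 ⟨hwv, hw⟩
  have hwC : w ∈ convexHull ℝ ((P.erase v : Finset Pt) : Set Pt) :=
    subset_convexHull ℝ _ (by exact_mod_cast hwE)
  -- find small ball around v inside hull
  obtain ⟨ε, hε, hball⟩ := Metric.mem_nhds_iff.1 (mem_interior_iff_mem_nhds.1 hvI)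
  have hvw : v - w ≠ 0 := sub_ne_zero.2 (Ne.symm hwv)
  set t : ℝ := ε / (2 * ‖v - w‖) with ht_def
  have hnorm : 0 < ‖v - w‖ := norm_pos_iff.2 hvw
  have ht : 0 < t := by positivity
  set u : Pt := v + t • (v - w) with hu_def
  have hu_ball : u ∈ Metric.ball v ε := by
    simp only [Metric.mem_ball, hu_def, dist_self_add_left, norm_smul, Real.norm_eq_abs,
      abs_of_pos ht]
    rw [ht_def]
    have h2 : ‖v - w‖ * (ε / (2 * ‖v - w‖)) = ε / 2 := by
      field_simp
    rw [mul_comm, h2]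
    linarith
  have huC : u ∈ convexHull ℝ (P : Set Pt) := hball hu_ball
  -- rewrite hull as insert v (erase)
  have hPeq : (P : Set Pt) = insert v ((P.erase v : Finset Pt) : Set Pt) := by
    rw [← Finset.coe_insert, Finset.insert_erase hvP]
  have hne : ((P.erase v : Finset Pt) : Set Pt).Nonempty := ⟨w, by exact_mod_cast hwE⟩
  rw [hPeq, convexHull_insert hne] at huC
  obtain ⟨v0, hv0, z, hzC, hzseg⟩ := mem_convexJoin.1 huC
  rw [Set.mem_singleton_iff] at hv0
  rw [hv0] at hzseg
  obtain ⟨μ1, μ2, hμ1, hμ2, hμsum, hcombo⟩ := hzseg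
  -- combo : μ1 • v + μ2 • z = u = v + t • (v - w)
  -- so μ2 • z + t • w = (μ2 + t) • v  hence v ∈ segment z w
  have key : μ2 • z + t • w = (μ2 + t) • v := by
    have h1 : μ1 • v + μ2 • z = v + t • (v - w) := by rw [hcombo, hu_def]
    have hμ1' : μ1 = 1 - μ2 := by linarith
    rw [hμ1'] at h1
    have : μ2 • z = μ2 • v + t • v - t • w := by
      rw [smul_sub] at h1
      apply add_left_cancel (a := (1 - μ2) • v)
      rw [h1]
      module
    rw [this]
    module
  have hsum_pos : 0 < μ2 + t := by linarith
  have hvseg : v = (μ2 / (μ2 + t)) • z + (t / (μ2 + t)) • w := by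
    have h9 : (μ2 + t) • v = μ2 • z + t • w := key.symm
    have h10 : v = ((μ2 + t)⁻¹ * (μ2 + t)) • v := by
      rw [inv_mul_cancel₀ (ne_of_gt hsum_pos), one_smul]
    rw [h10, mul_smul, h9, smul_add, ← mul_smul, ← mul_smul,
      div_eq_inv_mul, div_eq_inv_mul]
  have hmem : (μ2 / (μ2 + t)) • z + (t / (μ2 + t)) • w
      ∈ convexHull ℝ ((P.erase v : Finset Pt) : Set Pt) :=
    (convex_convexHull ℝ ((P.erase v : Finset Pt) : Set Pt)) hzC hwC
      (div_nonneg hμ2 (le_of_lt hsum_pos)) (div_nonneg (le_of_lt ht) (le_of_lt hsum_pos))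
      (by rw [← add_div, div_self (ne_of_gt hsum_pos)])
  rw [← hvseg] at hmem
  exact hv2 hmem


-- membership of an explicit combination in openSegment
lemma mem_openSegment_combo {x y : Pt} {t : ℝ} (h0 : 0 < t) (h1 : t < 1) :
    (1 - t) • x + t • y ∈ openSegment ℝ x y :=
  ⟨1 - t, t, by linarith, h0, by ring, rfl⟩

lemma interior_point_ne_hullVx {P : Finset Pt} {a v : Pt}
    (ha : a ∈ interior (convexHull ℝ (P : Set Pt))) (hv : v ∈ hullVx P)
    (hw : ∃ w ∈ P, w ≠ v) : a ≠ v := by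
  intro h
  obtain ⟨w, hwP, hwv⟩ := hw
  exact hullVx_not_interior hv hwP hwv (h ▸ ha)


lemma cross_root {A1 B1 A2 B2 : ℝ} (hA1 : 0 < A1) (hA2 : 0 < A2) (h : B1 < 0 ∨ B2 < 0) :
    ∃ t, 0 < t ∧ t < 1 ∧
      (((1-t)*A1 + t*B1 = 0 ∧ 0 ≤ (1-t)*A2 + t*B2) ∨
       ((1-t)*A2 + t*B2 = 0 ∧ 0 ≤ (1-t)*A1 + t*B1)) := by
  by_cases hB1 : B1 < 0
  · by_cases hB2 : B2 < 0
    · have hd1 : 0 < A1 - B1 := by linarith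
      have hd2 : 0 < A2 - B2 := by linarith
      set r1 := A1 / (A1 - B1) with hr1
      set r2 := A2 / (A2 - B2) with hr2
      have hr10 : 0 < r1 := by positivity
      have hr11 : r1 < 1 := by rw [hr1, div_lt_one hd1]; linarith
      have hr20 : 0 < r2 := by positivity
      have hr21 : r2 < 1 := by rw [hr2, div_lt_one hd2]; linarith
      have e1 : (1-r1)*A1 + r1*B1 = 0 := by rw [hr1]; field_simp; ring
      have e2 : (1-r2)*A2 + r2*B2 = 0 := by rw [hr2]; field_simp; ring
      rcases le_total r1 r2 with hle | hle
      · refine ⟨r1, hr10, hr11, Or.inl ⟨e1, ?_⟩⟩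
        nlinarith [e2]
      · refine ⟨r2, hr20, hr21, Or.inr ⟨e2, ?_⟩⟩
        nlinarith [e1]
    · push_neg at hB2
      have hd1 : 0 < A1 - B1 := by linarith
      set r1 := A1 / (A1 - B1) with hr1
      have hr10 : 0 < r1 := by positivity
      have hr11 : r1 < 1 := by rw [hr1, div_lt_one hd1]; linarith
      have e1 : (1-r1)*A1 + r1*B1 = 0 := by rw [hr1]; field_simp; ring
      refine ⟨r1, hr10, hr11, Or.inl ⟨e1, ?_⟩⟩
      nlinarith
  · push_neg at hB1
    have hB2 : B2 < 0 := by rcases h with h|h; · linarith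
                            · exact h
    have hd2 : 0 < A2 - B2 := by linarith
    set r2 := A2 / (A2 - B2) with hr2
    have hr20 : 0 < r2 := by positivity
    have hr21 : r2 < 1 := by rw [hr2, div_lt_one hd2]; linarith
    have e2 : (1-r2)*A2 + r2*B2 = 0 := by rw [hr2]; field_simp; ring
    refine ⟨r2, hr20, hr21, Or.inr ⟨e2, ?_⟩⟩
    nlinarith

lemma ray_hit {P : Finset Pt} (hgp : GenPos P) (T : Triangulation P)
    {a u w1 w2 : Pt}
    (haP : a ∈ P) (haI : a ∈ interior (convexHull ℝ (P : Set Pt)))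
    (huH : u ∈ hullVx P) (hau : T.Adj a u)
    (hw1P : w1 ∈ P) (hw2P : w2 ∈ P)
    (hw1a : w1 ≠ a) (hw1u : w1 ≠ u) (hw2a : w2 ≠ a) (hw2u : w2 ≠ u)
    (hadj : T.Adj w1 w2)
    {t s : ℝ} (ht0 : 0 < t) (ht1 : t < 1)
    (hz : ((1-t) • w1 + t • w2) - a = s • (u - a)) (hs : 0 ≤ s) : False := by
  have hw12 : w1 ≠ w2 := T.ne hadj
  set z : Pt := (1-t) • w1 + t • w2 with hzdef
  have hzseg : z ∈ openSegment ℝ w1 w2 := mem_openSegment_combo ht0 ht1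
  rcases eq_or_lt_of_le hs with hs0 | hs_pos
  · -- s = 0 : z = a, so a on the open segment w1 w2 : collinear
    have hza : z = a := by
      have : z - a = 0 := by rw [hz, ← hs0]; simp
      rwa [sub_eq_zero] at this
    have hcol : det2 (w1 - a) (w2 - a) = 0 :=
      collinear_of_combo (t := t) (by rw [← hzdef, hza])
    exact genPos_det2 hgp haP hw1P hw2P (Ne.symm hw1a) (Ne.symm hw2a) hw12 hcol
  · rcases lt_trichotomy s 1 with hs1 | hs1 | hs1
    · -- 0 < s < 1 : z on open segment a u, crossing the edge a-u
      have hzau : z ∈ openSegment ℝ a u := by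
        have : z = (1-s) • a + s • u := by
          have : z = a + s • (u - a) := by rw [← hz]; abel
          rw [this]; module
        rw [this]; exact mem_openSegment_combo hs_pos hs1
      have hsets := T.noncross hadj hau ⟨z, hzseg, hzau⟩
      have : w1 ∈ ({a, u} : Set Pt) := by
        rw [← hsets]; simp
      rcases this with h | h
      · exact hw1a h
      · exact hw1u h
    · -- s = 1 : z = u, so u on open segment w1 w2, collinear with w1 w2
      have hzu : z = u := by
        have : z - a = u - a := by rw [hz, hs1, one_smul]
        have := sub_left_injective this
        exact this
      have hcol : det2 (w1 - u) (w2 - u) = 0 :=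
        collinear_of_combo (t := t) (by rw [← hzdef, hzu])
      exact genPos_det2 hgp (hullVx_mem huH) hw1P hw2P (Ne.symm hw1u) (Ne.symm hw2u) hw12 hcol
    · -- s > 1 : u strictly between a and z, so u in the interior : contradiction
      have hzC : z ∈ convexHull ℝ (P : Set Pt) := by
        have hseg : segment ℝ w1 w2 ⊆ convexHull ℝ (P : Set Pt) :=
          (convex_convexHull ℝ _).segment_subset
            (subset_convexHull ℝ _ (by exact_mod_cast hw1P))
            (subset_convexHull ℝ _ (by exact_mod_cast hw2P))
        exact hseg (openSegment_subset_segment ℝ _ _ hzseg)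
      have hs_ne : s ≠ 0 := by linarith
      have hu_combo : u = (1 - 1/s) • a + (1/s) • z := by
        have h1 : z = a + s • (u - a) := by rw [← hz]; abel
        have h2 : (1/s) • (z - a) = u - a := by
          rw [h1]
          simp only [add_sub_cancel_left, smul_smul]
          rw [one_div, inv_mul_cancel₀ hs_ne, one_smul]
        have : u = a + (1/s) • (z - a) := by rw [h2]; abel
        rw [this]; module
      have hs0' : (0:ℝ) < s := by linarith
      have h1s : 1/s < 1 := by
        rw [div_lt_one hs0']
        exact hs1
      have huI : u ∈ interior (convexHull ℝ (P : Set Pt)) := by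
        rw [hu_combo]
        exact (convex_convexHull ℝ _).combo_interior_closure_mem_interior haI
          (subset_closure hzC) (by linarith) (by positivity) (by ring)
      exact hullVx_not_interior huH haP (interior_point_ne_hullVx haI huH ⟨w1, hw1P, hw1u⟩) huI

lemma no_cross {P : Finset Pt} (hgp : GenPos P) (T : Triangulation P)
    {a p q w1 w2 : Pt}
    (haP : a ∈ P) (haI : a ∈ interior (convexHull ℝ (P : Set Pt)))
    (hpH : p ∈ hullVx P) (hqH : q ∈ hullVx P)
    (hap : T.Adj a p) (haq : T.Adj a q)
    (hpq : 0 < det2 (p - a) (q - a))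
    (hw1P : w1 ∈ P) (hw2P : w2 ∈ P)
    (hw1a : w1 ≠ a) (hw1p : w1 ≠ p) (hw1q : w1 ≠ q)
    (hw2a : w2 ≠ a) (hw2p : w2 ≠ p) (hw2q : w2 ≠ q)
    (hadj : T.Adj w1 w2)
    (hin1 : 0 < det2 (p - a) (w1 - a)) (hin2 : 0 < det2 (w1 - a) (q - a))
    (hout : det2 (p - a) (w2 - a) < 0 ∨ det2 (w2 - a) (q - a) < 0) : False := by
  obtain ⟨t, ht0, ht1, hcase⟩ := cross_root hin1 hin2 hout
  have hpa : p - a ≠ 0 := sub_ne_zero.2 (Ne.symm (T.ne hap))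
  have hqa : q - a ≠ 0 := sub_ne_zero.2 (Ne.symm (T.ne haq))
  set z : Pt := (1-t) • w1 + t • w2 with hzdef
  have hg1 : det2 (p - a) (z - a) = (1-t) * det2 (p - a) (w1 - a) + t * det2 (p - a) (w2 - a) :=
    det2_combo _ _ _ _ _
  have hg2 : det2 (z - a) (q - a) = (1-t) * det2 (w1 - a) (q - a) + t * det2 (w2 - a) (q - a) :=
    det2_combo' _ _ _ _ _
  rcases hcase with ⟨he, hge⟩ | ⟨he, hge⟩
  · -- crosses the ray through p
    have hz0 : det2 (p - a) (z - a) = 0 := by rw [hg1]; exact he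
    obtain ⟨s, hs⟩ := exists_smul_of_det2_eq_zero hpa hz0
    have hsnn : 0 ≤ s := by
      have : det2 (z - a) (q - a) = s * det2 (p - a) (q - a) := by
        rw [hs, det2_smul_left]
      have h2 : 0 ≤ s * det2 (p - a) (q - a) := by
        rw [← this, hg2]; exact hge
      nlinarith
    exact ray_hit hgp T haP haI hpH hap hw1P hw2P hw1a hw1p hw2a hw2p hadj ht0 ht1 hs hsnn
  · -- crosses the ray through q
    have hz0 : det2 (q - a) (z - a) = 0 := by
      rw [det2_antisymm, neg_eq_zero, hg2]
      exact he
    obtain ⟨s, hs⟩ := exists_smul_of_det2_eq_zero hqa hz0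
    have hsnn : 0 ≤ s := by
      have h1 : det2 (p - a) (z - a) = s * det2 (p - a) (q - a) := by
        rw [hs]
        simp [det2, Prod.smul_fst, Prod.smul_snd, smul_eq_mul, Prod.fst_sub, Prod.snd_sub]
        ring
      have h2 : 0 ≤ s * det2 (p - a) (q - a) := by
        rw [← h1, hg1]; exact hge
      nlinarith
    exact ray_hit hgp T haP haI hqH haq hw1P hw2P hw1a hw1q hw2a hw2q hadj ht0 ht1 hs hsnn

lemma sep_contra {P : Finset Pt} (hgp : GenPos P) (T : Triangulation P)
    (hconn : KConnected T.toPlaneGraph.graph 4)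
    {a p q x y : Pt}
    (haP : a ∈ P) (haI : a ∈ interior (convexHull ℝ (P : Set Pt)))
    (hpH : p ∈ hullVx P) (hqH : q ∈ hullVx P)
    (hap : T.Adj a p) (haq : T.Adj a q)
    (hpq : 0 < det2 (p - a) (q - a))
    (hxP : x ∈ P) (hyP : y ∈ P)
    (hxa : x ≠ a) (hxp : x ≠ p) (hxq : x ≠ q)
    (hya : y ≠ a) (hyp : y ≠ p) (hyq : y ≠ q)
    (hxin : 0 < det2 (p - a) (x - a) ∧ 0 < det2 (x - a) (q - a))
    (hyout : det2 (p - a) (y - a) < 0 ∨ det2 (y - a) (q - a) < 0) : False := by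
  classical
  have hpP : p ∈ P := hullVx_mem hpH
  have hqP : q ∈ P := hullVx_mem hqH
  set S : Finset {z // z ∈ P} := {⟨a, haP⟩, ⟨p, hpP⟩, ⟨q, hqP⟩} with hSdef
  have hScard : S.card < 4 := by
    have h1 : S.card ≤ 3 := by
      apply le_trans (Finset.card_insert_le _ _)
      apply Nat.succ_le_succ
      apply le_trans (Finset.card_insert_le _ _)
      simp
    omega
  have hcon := (hconn.2 S hScard)
  -- membership in the complement
  have hmemC : ∀ (w : Pt) (hw : w ∈ P), w ≠ a → w ≠ p → w ≠ q →
      (⟨w, hw⟩ : {z // z ∈ P}) ∈ ((↑S : Set {z // z ∈ P})ᶜ) := by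
    intro w hw h1 h2 h3
    simp only [hSdef, Finset.coe_insert, Set.mem_compl_iff, Set.mem_insert_iff,
      Finset.coe_singleton, Set.mem_singleton_iff]
    push_neg
    exact ⟨by simp [Subtype.ext_iff, h1], by simp [Subtype.ext_iff, h2],
      by simp [Subtype.ext_iff, h3]⟩
  have hxC := hmemC x hxP hxa hxp hxq
  have hyC := hmemC y hyP hya hyp hyq
  obtain ⟨walk⟩ := hcon.preconnected ⟨⟨x, hxP⟩, hxC⟩ ⟨⟨y, hyP⟩, hyC⟩
  -- positivity side predicate
  set Pos : Pt → Prop := fun w => 0 < det2 (p - a) (w - a) ∧ 0 < det2 (w - a) (q - a)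
    with hPos
  have key : ∀ (u v : ((↑S : Set {z // z ∈ P})ᶜ : Set _)),
      ((T.toPlaneGraph.graph.induce _).Walk u v) → Pos u.1.1 → ¬ Pos v.1.1 → False := by
    intro u v w
    induction w with
    | nil => intro h1 h2; exact h2 h1
    | @cons u' t' v' h w ih =>
      intro h1 h2
      -- t' is in the complement of S
      have ht'P : t'.1.1 ∈ P := t'.1.2
      have ht'S := t'.2
      simp only [hSdef, Finset.coe_insert, Set.mem_compl_iff, Set.mem_insert_iff,
        Finset.coe_singleton, Set.mem_singleton_iff] at ht'S
      push_neg at ht'S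
      obtain ⟨hta, htp, htq⟩ := ht'S
      have hta' : t'.1.1 ≠ a := by
        intro hh; exact hta (Subtype.ext hh)
      have htp' : t'.1.1 ≠ p := by
        intro hh; exact htp (Subtype.ext hh)
      have htq' : t'.1.1 ≠ q := by
        intro hh; exact htq (Subtype.ext hh)
      by_cases hPos_t : Pos t'.1.1
      · exact ih hPos_t h2
      · -- crossing edge
        have hadj : T.Adj u'.1.1 t'.1.1 := h
        -- u' complement facts
        have hu'S := u'.2
        simp only [hSdef, Finset.coe_insert, Set.mem_compl_iff, Set.mem_insert_iff,
          Finset.coe_singleton, Set.mem_singleton_iff] at hu'S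
        push_neg at hu'S
        obtain ⟨hua, hup, huq⟩ := hu'S
        have hua' : u'.1.1 ≠ a := fun hh => hua (Subtype.ext hh)
        have hup' : u'.1.1 ≠ p := fun hh => hup (Subtype.ext hh)
        have huq' : u'.1.1 ≠ q := fun hh => huq (Subtype.ext hh)
        -- t' is strictly outside
        have ht1 : det2 (p - a) (t'.1.1 - a) ≠ 0 :=
          genPos_det2 hgp haP hpP t'.1.2 (T.ne hap) (Ne.symm hta') (Ne.symm htp')
        have ht2 : det2 (t'.1.1 - a) (q - a) ≠ 0 :=
          genPos_det2 hgp haP t'.1.2 hqP (Ne.symm hta') (T.ne haq) htq'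
        have houtt : det2 (p - a) (t'.1.1 - a) < 0 ∨ det2 (t'.1.1 - a) (q - a) < 0 := by
          rcases lt_or_gt_of_ne ht1 with hh | hh
          · exact Or.inl hh
          rcases lt_or_gt_of_ne ht2 with hh2 | hh2
          · exact Or.inr hh2
          exact absurd ⟨hh, hh2⟩ hPos_t
        exact no_cross hgp T haP haI hpH hqH hap haq hpq u'.1.2 t'.1.2
          hua' hup' huq' hta' htp' htq' hadj h1.1 h1.2 houtt
  have hPosx : Pos x := hxin
  have hPosy : ¬ Pos y := by
    intro hh
    rcases hyout with hh2 | hh2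
    · exact absurd hh.1 (by linarith)
    · exact absurd hh.2 (by linarith)
  exact key _ _ walk hPosx hPosy


-- Cover machinery on vectors
def InC (p q x : Pt) : Prop := 0 < det2 p x ∧ 0 < det2 x q
def OutC (p q y : Pt) : Prop := det2 p y < 0 ∨ det2 y q < 0

def SepCone (s : Set Pt) (w : Pt) : Prop :=
  ∃ p ∈ s, ∃ q ∈ s, 0 < det2 p q ∧
    (∃ x ∈ insert w s, x ≠ p ∧ x ≠ q ∧ InC p q x) ∧
    (∃ y ∈ insert w s, y ≠ p ∧ y ≠ q ∧ OutC p q y)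

lemma ne_of_det2_pos {u v : Pt} (h : 0 < det2 u v) : u ≠ v := by
  intro hh; rw [hh, det2_self] at h; exact lt_irrefl 0 h


lemma ne_of_det2_ne_zero {u v : Pt} (h : det2 u v ≠ 0) : u ≠ v := by
  intro hh; rw [hh, det2_self] at h; exact h rfl

lemma base3' {u1 u2 u3 w : Pt}
    (h13 : det2 u1 u3 ≠ 0) (h23 : det2 u2 u3 ≠ 0)
    (hw1 : det2 u1 w ≠ 0) (hw2 : det2 u2 w ≠ 0) (hw3 : det2 u3 w ≠ 0)
    (h12 : 0 < det2 u1 u2) :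
    SepCone {u1, u2, u3} w := by
  have n12 : u1 ≠ u2 := ne_of_det2_pos h12
  have n13 : u1 ≠ u3 := ne_of_det2_ne_zero h13
  have n23 : u2 ≠ u3 := ne_of_det2_ne_zero h23
  have nw1 : w ≠ u1 := (ne_of_det2_ne_zero hw1).symm
  have nw2 : w ≠ u2 := (ne_of_det2_ne_zero hw2).symm
  have nw3 : w ≠ u3 := (ne_of_det2_ne_zero hw3).symm
  have a13 := det2_antisymm u1 u3
  have a23 := det2_antisymm u2 u3
  have a12 := det2_antisymm u1 u2
  have aw1 := det2_antisymm u1 w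
  have aw2 := det2_antisymm u2 w
  have aw3 := det2_antisymm u3 w
  rcases lt_or_gt_of_ne h13 with s13 | s13 <;> rcases lt_or_gt_of_ne h23 with s23 | s23
  · -- det2 u1 u3 < 0, det2 u2 u3 < 0 : i.e. 0 < det2 u3 u2 : case (iii)
    by_cases hwin : 0 < det2 u3 w ∧ 0 < det2 w u2
    · rcases lt_or_gt_of_ne hw1 with t1 | t1
      · -- w in cone (u3, u1)
        exact ⟨u3, by simp, u1, by simp, by linarith,
          ⟨w, by simp, nw3, nw1, hwin.1, by linarith⟩,
          ⟨u2, by simp, n23, n12.symm, Or.inr (by linarith)⟩⟩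
      · -- w in cone (u1, u2)
        exact ⟨u1, by simp, u2, by simp, h12,
          ⟨w, by simp, nw1, nw2, t1, hwin.2⟩,
          ⟨u3, by simp, n13.symm, n23.symm, Or.inl (by linarith)⟩⟩
    · -- w outside clCone(u3,u2) : u1 is inside
      push_neg at hwin
      have hout : OutC u3 u2 w := by
        rcases lt_or_gt_of_ne hw3 with t3 | t3
        · exact Or.inl t3
        · refine Or.inr ?_
          have h9 := hwin (by linarith)
          rcases lt_or_gt_of_ne hw2 with t2 | t2 <;> linarith
      exact ⟨u3, by simp, u2, by simp, by linarith,
        ⟨u1, by simp, n13, n12, by linarith, h12⟩,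
        ⟨w, by simp, nw3, nw2, hout⟩⟩
  · -- det2 u1 u3 < 0, 0 < det2 u2 u3 : case (iv) cyclic
    rcases lt_or_gt_of_ne hw1 with t1 | t1 <;> rcases lt_or_gt_of_ne hw2 with t2 | t2 <;>
      rcases lt_or_gt_of_ne hw3 with t3 | t3
    · -- all ti < 0 : impossible
      exfalso; nlinarith [det2_plucker u1 u2 u3 w]
    · -- (−,−,+) : w in cone(u3,u1)
      exact ⟨u3, by simp, u1, by simp, by linarith,
        ⟨w, by simp, nw3, nw1, t3, by linarith⟩,
        ⟨u2, by simp, n23, n12.symm, Or.inr (by linarith)⟩⟩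
    · -- (−,+,−) : w in cone(u2,u3)
      exact ⟨u2, by simp, u3, by simp, s23,
        ⟨w, by simp, nw2, nw3, t2, by linarith⟩,
        ⟨u1, by simp, n12, n13, Or.inl (by linarith)⟩⟩
    · -- (−,+,+) : w in cone(u3,u1)
      exact ⟨u3, by simp, u1, by simp, by linarith,
        ⟨w, by simp, nw3, nw1, t3, by linarith⟩,
        ⟨u2, by simp, n23, n12.symm, Or.inr (by linarith)⟩⟩
    · -- (+,−,−) : w in cone(u1,u2)
      exact ⟨u1, by simp, u2, by simp, h12,
        ⟨w, by simp, nw1, nw2, t1, by linarith⟩,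
        ⟨u3, by simp, n13.symm, n23.symm, Or.inl s13⟩⟩
    · -- (+,−,+) : w in cone(u1,u2)
      exact ⟨u1, by simp, u2, by simp, h12,
        ⟨w, by simp, nw1, nw2, t1, by linarith⟩,
        ⟨u3, by simp, n13.symm, n23.symm, Or.inl s13⟩⟩
    · -- (+,+,−) : w in cone(u2,u3)
      exact ⟨u2, by simp, u3, by simp, s23,
        ⟨w, by simp, nw2, nw3, t2, by linarith⟩,
        ⟨u1, by simp, n12, n13, Or.inl (by linarith)⟩⟩
    · -- all ti > 0 : impossible
      exfalso; nlinarith [det2_plucker u1 u2 u3 w]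
  · -- 0 < det2 u1 u3, det2 u2 u3 < 0 : u3 in cone(u1,u2) : case (i)
    by_cases hwin : 0 < det2 u1 w ∧ 0 < det2 w u2
    · rcases lt_or_gt_of_ne hw3 with t3 | t3
      · -- w in cone(u1,u3)
        exact ⟨u1, by simp, u3, by simp, s13,
          ⟨w, by simp, nw1, nw3, hwin.1, by linarith⟩,
          ⟨u2, by simp, n12.symm, n23, Or.inr s23⟩⟩
      · -- w in cone(u3,u2)
        exact ⟨u3, by simp, u2, by simp, by linarith,
          ⟨w, by simp, nw3, nw2, t3, hwin.2⟩,
          ⟨u1, by simp, n13, n12, Or.inl (by linarith)⟩⟩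
    · push_neg at hwin
      have hout : OutC u1 u2 w := by
        rcases lt_or_gt_of_ne hw1 with t1 | t1
        · exact Or.inl t1
        · refine Or.inr ?_
          have h9 := hwin (by linarith)
          rcases lt_or_gt_of_ne hw2 with t2 | t2 <;> linarith
      exact ⟨u1, by simp, u2, by simp, h12,
        ⟨u3, by simp, n13.symm, n23.symm, s13, by linarith⟩,
        ⟨w, by simp, nw1, nw2, hout⟩⟩
  · -- 0 < det2 u1 u3, 0 < det2 u2 u3 : case (ii) u2 in cone(u1,u3)
    by_cases hwin : 0 < det2 u1 w ∧ 0 < det2 w u3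
    · rcases lt_or_gt_of_ne hw2 with t2 | t2
      · -- w in cone(u1,u2)
        exact ⟨u1, by simp, u2, by simp, h12,
          ⟨w, by simp, nw1, nw2, hwin.1, by linarith⟩,
          ⟨u3, by simp, n13.symm, n23.symm, Or.inr (by linarith)⟩⟩
      · -- w in cone(u2,u3)
        exact ⟨u2, by simp, u3, by simp, by linarith,
          ⟨w, by simp, nw2, nw3, t2, hwin.2⟩,
          ⟨u1, by simp, n12, n13, Or.inl (by linarith)⟩⟩
    · push_neg at hwin
      have hout : OutC u1 u3 w := by
        rcases lt_or_gt_of_ne hw1 with t1 | t1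
        · exact Or.inl t1
        · refine Or.inr ?_
          have h9 := hwin (by linarith)
          rcases lt_or_gt_of_ne hw3 with t3 | t3 <;> linarith
      exact ⟨u1, by simp, u3, by simp, s13,
        ⟨u2, by simp, n12.symm, n23, h12, by linarith⟩,
        ⟨w, by simp, nw1, nw3, hout⟩⟩

lemma base3 {u1 u2 u3 w : Pt}
    (h12 : det2 u1 u2 ≠ 0) (h13 : det2 u1 u3 ≠ 0) (h23 : det2 u2 u3 ≠ 0)
    (hw1 : det2 u1 w ≠ 0) (hw2 : det2 u2 w ≠ 0) (hw3 : det2 u3 w ≠ 0) :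
    SepCone {u1, u2, u3} w := by
  rcases lt_or_gt_of_ne h12 with s12 | s12
  · have hset : ({u2, u1, u3} : Set Pt) = {u1, u2, u3} := Set.insert_comm u2 u1 {u3}
    rw [← hset]
    exact base3' h23 h13 hw2 hw1 hw3 (by linarith [det2_antisymm u1 u2])
  · exact base3' h13 h23 hw1 hw2 hw3 s12

lemma three_fan_contra {P : Finset Pt} (hgp : GenPos P) (T : Triangulation P)
    (hconn : KConnected T.toPlaneGraph.graph 4)
    {a v1 v2 v3 w0 : Pt}
    (haP : a ∈ P) (haI : a ∈ interior (convexHull ℝ (P : Set Pt)))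
    (h1H : v1 ∈ hullVx P) (h2H : v2 ∈ hullVx P) (h3H : v3 ∈ hullVx P)
    (ha1 : T.Adj a v1) (ha2 : T.Adj a v2) (ha3 : T.Adj a v3)
    (h12 : v1 ≠ v2) (h13 : v1 ≠ v3) (h23 : v2 ≠ v3)
    (hw0P : w0 ∈ P) (hw0a : w0 ≠ a) (hw01 : w0 ≠ v1) (hw02 : w0 ≠ v2) (hw03 : w0 ≠ v3) :
    False := by
  have h1P := hullVx_mem h1H
  have h2P := hullVx_mem h2H
  have h3P := hullVx_mem h3H
  have ha1' : a ≠ v1 := T.ne ha1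
  have ha2' : a ≠ v2 := T.ne ha2
  have ha3' : a ≠ v3 := T.ne ha3
  -- all determinant nonvanishing facts
  have d12 : det2 (v1 - a) (v2 - a) ≠ 0 := genPos_det2 hgp haP h1P h2P ha1' ha2' h12
  have d13 : det2 (v1 - a) (v3 - a) ≠ 0 := genPos_det2 hgp haP h1P h3P ha1' ha3' h13
  have d23 : det2 (v2 - a) (v3 - a) ≠ 0 := genPos_det2 hgp haP h2P h3P ha2' ha3' h23
  have dw1 : det2 (v1 - a) (w0 - a) ≠ 0 :=
    genPos_det2 hgp haP h1P hw0P ha1' (Ne.symm hw0a) (Ne.symm hw01)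
  have dw2 : det2 (v2 - a) (w0 - a) ≠ 0 :=
    genPos_det2 hgp haP h2P hw0P ha2' (Ne.symm hw0a) (Ne.symm hw02)
  have dw3 : det2 (v3 - a) (w0 - a) ≠ 0 :=
    genPos_det2 hgp haP h3P hw0P ha3' (Ne.symm hw0a) (Ne.symm hw03)
  have hsep : SepCone {v1 - a, v2 - a, v3 - a} (w0 - a) := base3 d12 d13 d23 dw1 dw2 dw3
  obtain ⟨p', hp', q', hq', hpq', ⟨x', hx', hxp', hxq', hxin'⟩, ⟨y', hy', hyp', hyq', hyout'⟩⟩ :=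
    hsep
  -- map vectors back to points
  have hback : ∀ z' ∈ ({v1 - a, v2 - a, v3 - a} : Set Pt),
      ∃ zp, z' = zp - a ∧ zp ∈ hullVx P ∧ T.Adj a zp := by
    intro z' hz'
    rcases hz' with hh | hh | hh
    · exact ⟨v1, hh, h1H, ha1⟩
    · exact ⟨v2, hh, h2H, ha2⟩
    · exact ⟨v3, hh, h3H, ha3⟩
  have hback2 : ∀ z' ∈ insert (w0 - a) ({v1 - a, v2 - a, v3 - a} : Set Pt),
      ∃ zp, z' = zp - a ∧ zp ∈ P ∧ zp ≠ a := by
    intro z' hz'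
    rcases hz' with hh | hh | hh | hh
    · exact ⟨w0, hh, hw0P, hw0a⟩
    · exact ⟨v1, hh, h1P, Ne.symm ha1'⟩
    · exact ⟨v2, hh, h2P, Ne.symm ha2'⟩
    · exact ⟨v3, hh, h3P, Ne.symm ha3'⟩
  obtain ⟨pp, hpe, hppH, hppA⟩ := hback p' hp'
  obtain ⟨qp, hqe, hqqH, hqqA⟩ := hback q' hq'
  obtain ⟨xp, hxe, hxpP, hxpa⟩ := hback2 x' hx'
  obtain ⟨yp, hye, hypP, hypa⟩ := hback2 y' hy'
  subst hpe; subst hqe; subst hxe; subst hye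
  have hne_of_vne : ∀ {z1 z2 : Pt}, z1 - a ≠ z2 - a → z1 ≠ z2 := by
    intro z1 z2 hzz h
    exact hzz (by rw [h])
  exact sep_contra hgp T hconn haP haI hppH hqqH hppA hqqA hpq' hxpP hypP
    hxpa (hne_of_vne hxp') (hne_of_vne hxq') hypa (hne_of_vne hyp') (hne_of_vne hyq')
    hxin' hyout'


/-- in a 4-connected triangulation, no two inward triangles share
their inward vertex: every interior point is the inward vertex of at most one
inward triangle. -/
theorem inward_vertex_unique (P : Finset Pt) (hgp : GenPos P)
    (T : Triangulation P) (hconn : KConnected T.toPlaneGraph.graph 4)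
    (a b c b' c' : Pt)
    (h : InwardTri T.toPlaneGraph b c a) (h' : InwardTri T.toPlaneGraph b' c' a) :
    ({b, c} : Set Pt) = {b', c'} := by
  classical
  by_contra hne
  -- basic unpacking
  obtain ⟨⟨hbc, hca, hba⟩, ⟨hbH, hcH, hbc_ne, _⟩, haint⟩ := h
  obtain ⟨⟨hbc', hca', hba'⟩, ⟨hbH', hcH', hbc_ne', _⟩, _⟩ := h'
  have haP : a ∈ P := (Finset.mem_filter.1 haint).1
  have haI : a ∈ interior (convexHull ℝ (P : Set Pt)) := (Finset.mem_filter.1 haint).2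
  have hab : T.Adj a b := T.symm hba
  have hac : T.Adj a c := T.symm hca
  have hab' : T.Adj a b' := T.symm hba'
  have hac' : T.Adj a c' := T.symm hca'
  have hbP := hullVx_mem hbH
  have hcP := hullVx_mem hcH
  have hbP' := hullVx_mem hbH'
  have hcP' := hullVx_mem hcH'
  -- the two base sets are distinct, so three distinct vertices exist
  have hcard : 5 ≤ P.card := by
    have := hconn.1
    rwa [Fintype.card_coe] at this
  -- helper to extract a fifth point
  have extra : ∀ (v1 v2 v3 : Pt), ∃ w0 ∈ P, w0 ≠ a ∧ w0 ≠ v1 ∧ w0 ≠ v2 ∧ w0 ≠ v3 := by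
    intro v1 v2 v3
    have hsub : ¬ (P ⊆ {a, v1, v2, v3}) := by
      intro hsub
      have := Finset.card_le_card hsub
      have h4 : ({a, v1, v2, v3} : Finset Pt).card ≤ 4 := by
        apply le_trans (Finset.card_insert_le _ _)
        apply Nat.succ_le_succ
        apply le_trans (Finset.card_insert_le _ _)
        apply Nat.succ_le_succ
        apply le_trans (Finset.card_insert_le _ _)
        simp
      omega
    rw [Finset.not_subset] at hsub
    obtain ⟨w0, hw0P, hw0⟩ := hsub
    simp only [Finset.mem_insert, Finset.mem_singleton, not_or] at hw0
    exact ⟨w0, hw0P, hw0.1, hw0.2.1, hw0.2.2.1, hw0.2.2.2⟩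
  by_cases hd : b' ≠ b ∧ b' ≠ c
  · -- v1, v2, v3 := b, c, b'
    by_cases hd2 : c' ≠ b ∧ c' ≠ c ∧ c' ≠ b'
    · exact three_fan_contra hgp T hconn haP haI hbH hcH hbH' hab hac hab'
        hbc_ne (Ne.symm hd.1) (Ne.symm hd.2) hcP' (Ne.symm (T.ne hac'))
        hd2.1 hd2.2.1 hd2.2.2
    · obtain ⟨w0, hw0P, hw0a, hw01, hw02, hw03⟩ := extra b c b'
      exact three_fan_contra hgp T hconn haP haI hbH hcH hbH' hab hac hab'
        hbc_ne (Ne.symm hd.1) (Ne.symm hd.2) hw0P hw0a hw01 hw02 hw03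
  · -- b' ∈ {b, c} : then c' ∉ {b, c}, use v1, v2, v3 := b, c, c'
    push_neg at hd
    have hcb : c' ≠ b ∧ c' ≠ c := by
      by_contra hh
      push_neg at hh
      apply hne
      -- {b,c} = {b',c'}
      rcases Classical.em (b' = b) with h1 | h1
      · -- b' = b; c' must be c (c' ≠ b' = b ...)
        have hc'b : c' ≠ b := by rw [← h1]; exact Ne.symm hbc_ne'
        have hc'c : c' = c := hh hc'b
        rw [h1, hc'c]
      · have h2 : b' = c := hd h1
        -- c' ≠ c since c' ≠ b' = c
        have hc'c : c' ≠ c := by rw [← h2]; exact Ne.symm hbc_ne'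
        have hc'b : c' = b := by
          by_contra h3
          exact hc'c (hh h3)
        rw [h2, hc'b]
        exact Set.pair_comm b c
    obtain ⟨w0, hw0P, hw0a, hw01, hw02, hw03⟩ := extra b c c'
    exact three_fan_contra hgp T hconn haP haI hbH hcH hcH' hab hac hac'
      hbc_ne (Ne.symm hcb.1) (Ne.symm hcb.2) hw0P hw0a hw01 hw02 hw03
end
end
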